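/- arXiv:2005.05291 — 4 statements merged into one kernel-verified Lean document; each statement's English description precedes it below -/
import Mathlib

section
/- (Density of ratio-dense subgraphs.) For every integer ℓ ≥ 2 and all reals 0 < δ ≤ 1 and ε > 0 there exists t_0 such that for all t ≥ t_0 the following holds: if L is an ℓ-graph on t vertices with edge density δ, and C is a subgraph of L with at least one edge whose edge density ν and whose shadow ∂(C)'s edge density ν' satisfy ν ≥ δ·ν', then ν ≥ δ^ℓ − ε. -/
open Finset

variable {A : Type*} [DecidableEq A]

/-- The set of vertices occupying positions `i, …, i+k-1` of the walk `w`. -/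
def walkEdgeAt (k : ℕ) (w : List A) (i : ℕ) : Finset A :=
  ((w.drop i).take k).toFinset

/-- `w` is a tight walk in the `k`-graph with edge set `E`: it has at least `k`
vertices and every `k` consecutive vertices form an edge of `E`. -/
def IsTightWalk (k : ℕ) (E : Finset (Finset A)) (w : List A) : Prop :=
  k ≤ w.length ∧ ∀ i, i + k ≤ w.length → walkEdgeAt k w i ∈ E

/-- The edge `e` appears on the walk `w` (as `k` consecutive vertices). -/
def EdgeOnWalk (k : ℕ) (w : List A) (e : Finset A) : Prop :=
  ∃ i, i + k ≤ w.length ∧ walkEdgeAt k w i = e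

/-- A `k`-uniform edge set is tightly connected if any two of its edges lie on a
common tight walk all of whose edges belong to it. -/
def TightlyConnected (k : ℕ) (E : Finset (Finset A)) : Prop :=
  ∀ e₁ ∈ E, ∀ e₂ ∈ E, ∃ w : List A, IsTightWalk k E w ∧ EdgeOnWalk k w e₁ ∧ EdgeOnWalk k w e₂

/-- `w` is a closed tight walk: every cyclic interval of `k` consecutive vertices
forms an edge of `E`.  Its length is `w.length`. -/
def IsClosedTightWalk (k : ℕ) (E : Finset (Finset A)) (w : List A) : Prop :=
  k ≤ w.length ∧ ∀ i < w.length, ((w.rotate i).take k).toFinset ∈ E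

/-- A tight Hamilton cycle: a cyclic ordering of all the vertices in which every `k`
cyclically consecutive vertices form an edge. -/
def HasTightHamCycle (k : ℕ) (V : Finset A) (E : Finset (Finset A)) : Prop :=
  ∃ w : List A, w.Nodup ∧ w.toFinset = V ∧ IsClosedTightWalk k E w

/-- The `j`-th shadow: all `j`-element sets contained in some edge. -/
def shadow (j : ℕ) (E : Finset (Finset A)) : Finset (Finset A) :=
  E.biUnion fun e => e.powersetCard j

/-- The link graph of `S`: the `(k-d)`-graph whose edges are `e \ S` for edges `e ⊇ S`. -/
def link (S : Finset A) (E : Finset (Finset A)) : Finset (Finset A) :=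
  (E.filter fun e => S ⊆ e).image fun e => e \ S

/-- `E` has a fractional matching of size at least `m`. -/
def HasFracMatching (E : Finset (Finset A)) (m : ℝ) : Prop :=
  ∃ w : Finset A → ℝ,
    (∀ e ∈ E, 0 ≤ w e ∧ w e ≤ 1) ∧
    (∀ v : A, ∑ e ∈ E.filter (fun e' => v ∈ e'), w e ≤ 1) ∧
    m ≤ ∑ e ∈ E, w e

/-- `E` has a `b`-fractional matching of size at least `m` (vertex constraints on `V`). -/
def HasBFracMatching (V : Finset A) (E : Finset (Finset A)) (b : A → ℝ) (m : ℝ) : Prop :=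
  ∃ w : Finset A → ℝ,
    (∀ e ∈ E, 0 ≤ w e ∧ w e ≤ 1) ∧
    (∀ v ∈ V, ∑ e ∈ E.filter (fun e' => v ∈ e'), w e ≤ b v) ∧
    m ≤ ∑ e ∈ E, w e

/-- `γ`-robustly matchable: every vertex weighting with values in `[1-γ,1]` is realised
exactly by an edge weighting with values in `[0,1]`. -/
def RobustlyMatchable (γ : ℝ) (V : Finset A) (E : Finset (Finset A)) : Prop :=
  ∀ b : A → ℝ, (∀ v ∈ V, 1 - γ ≤ b v ∧ b v ≤ 1) →
    ∃ w : Finset A → ℝ, (∀ e ∈ E, 0 ≤ w e ∧ w e ≤ 1) ∧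
      ∀ v ∈ V, ∑ e ∈ E.filter (fun e' => v ∈ e'), w e = b v

/-- A switcher: an edge `e` with a central vertex `a` such that for every `b ∈ e`
there is `c ∉ e` with `(e ∪ {c}) \ {a}` and `(e ∪ {c}) \ {b}` both edges. -/
def HasSwitcher (C : Finset (Finset A)) : Prop :=
  ∃ e ∈ C, ∃ a ∈ e, ∀ b ∈ e, ∃ c, c ∉ e ∧
    insert c (e.erase a) ∈ C ∧ insert c (e.erase b) ∈ C

/-- An arc for the `d`-vicinity `C` of the `k`-graph with edge set `E`: a tuple of
`k+1` distinct vertices `v₁, …, v_{k+1}` with `{v₁,…,v_d} ∈ ∂_d`,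
`{v_{d+1},…,v_k} ∈ C {v₁,…,v_d}`, `{v₂,…,v_{d+1}} ∈ ∂_d` and
`{v_{d+2},…,v_{k+1}} ∈ C {v₂,…,v_{d+1}}`. -/
def HasArc (k d : ℕ) (E : Finset (Finset A)) (C : Finset A → Finset (Finset A)) : Prop :=
  ∃ l : List A, l.length = k + 1 ∧ l.Nodup ∧
    (l.take d).toFinset ∈ shadow d E ∧
    ((l.drop d).take (k - d)).toFinset ∈ C ((l.take d).toFinset) ∧
    ((l.drop 1).take d).toFinset ∈ shadow d E ∧
    (l.drop (d + 1)).toFinset ∈ C (((l.drop 1).take d).toFinset)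

/-- The `k`-graph generated by a `d`-vicinity: all sets `B ∪ S` with `S ∈ ∂_d(E)`
and `B ∈ C S`. -/
def generatedEdges (d : ℕ) (E : Finset (Finset A)) (C : Finset A → Finset (Finset A)) :
    Finset (Finset A) :=
  (shadow d E).biUnion fun S => (C S).image fun B => B ∪ S

/-- `α`-perturbed minimum relative `d`-degree at least `δ` for a `k`-graph on vertex
set `V` with edge set `E`. -/
def PerturbedDegLB (k d : ℕ) (a δ : ℝ) (V : Finset A) (E : Finset (Finset A)) : Prop :=
  ∀ j : ℕ, 1 ≤ j → j ≤ d →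
    (∀ S ∈ shadow j E,
      δ * (((V.card - j).choose (k - j) : ℕ) : ℝ) ≤ ((E.filter fun e => S ⊆ e).card : ℝ)) ∧
    ((((V.powersetCard j).filter fun S => S ∉ shadow j E).card : ℝ)
        ≤ a * ((V.card.choose j : ℕ) : ℝ)) ∧
    (∀ T : Finset A, (T ∈ shadow (j - 1) E ∨ (j = 1 ∧ T = ∅)) →
      ((((V.powersetCard j).filter fun S => T ⊆ S ∧ S ∉ shadow j E).card : ℝ)
        < a * ((V.card : ℝ) - (j : ℝ) + 1)))

/-- A `(γ, δ)`-Hamilton `d`-vicinity of a `k`-graph on `t = V.card` vertices. -/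
def IsHamVicinity (k d : ℕ) (γ δ : ℝ) (V : Finset A) (E : Finset (Finset A))
    (C : Finset A → Finset (Finset A)) : Prop :=
  (∀ S ∈ shadow d E, C S ⊆ link S E) ∧
  (∀ S ∈ shadow d E, TightlyConnected (k - d) (C S)) ∧
  (∀ S ∈ shadow d E, ∀ S' ∈ shadow d E, (C S ∩ C S').Nonempty) ∧
  (∀ S ∈ shadow d E, HasSwitcher (C S)) ∧
  HasArc k d E C ∧
  (∀ S ∈ shadow d E, HasFracMatching (C S) ((1 / (k : ℝ) + γ) * (V.card : ℝ))) ∧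
  (∀ S ∈ shadow d E, (1 - δ + γ) * ((V.card.choose (k - d) : ℕ) : ℝ) ≤ ((C S).card : ℝ))

/-- An `(a, γ, δ)`-Hamilton framework: a subgraph on vertex set `VH` with edge set `EH`
of a `k`-graph on vertex set `VR`, satisfying (F1)–(F5). -/
def IsHamFramework (k : ℕ) (a γ δ : ℝ) (VR VH : Finset A) (EH : Finset (Finset A)) : Prop :=
  (1 - a) * (VR.card : ℝ) ≤ (VH.card : ℝ) ∧
  TightlyConnected k EH ∧
  (∃ w : List A, IsClosedTightWalk k EH w ∧ w.length % k = 1 % k) ∧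
  RobustlyMatchable γ VH EH ∧
  (∀ v ∈ VH, (1 - δ + γ) * (((VH.card - 1).choose (k - 1) : ℕ) : ℝ)
      ≤ ((EH.filter fun e => v ∈ e).card : ℝ))

/-- A tight component: an edge-maximal tightly connected subgraph. -/
def IsTightComponent (k : ℕ) (E C : Finset (Finset A)) : Prop :=
  C ⊆ E ∧ TightlyConnected k C ∧
    ∀ C' : Finset (Finset A), C ⊆ C' → C' ⊆ E → TightlyConnected k C' → C' = C

/-- `δ` has the `(k,d)`-Hamilton-cycle property. -/
def HamCycleProp (k d : ℕ) (δ : ℝ) : Prop :=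
  ∀ μ : ℝ, 0 < μ → ∃ n₀ : ℕ, ∀ (B : Type) [DecidableEq B],
    ∀ (V : Finset B) (E : Finset (Finset B)),
      n₀ ≤ V.card → (∀ e ∈ E, e ⊆ V ∧ e.card = k) →
      (∀ S ⊆ V, S.card = d →
        (δ + μ) * (((V.card - d).choose (k - d) : ℕ) : ℝ)
          ≤ ((E.filter fun e => S ⊆ e).card : ℝ)) →
      HasTightHamCycle k V E

/-- `δ` has the `(k,d)`-Hamilton-framework property. -/
def HamFrameworkProp (k d : ℕ) (δ : ℝ) : Prop :=
  ∀ μ : ℝ, 0 < μ → ∃ γ₀ : ℝ, 0 < γ₀ ∧ ∀ γ : ℝ, 0 < γ → γ ≤ γ₀ →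
    ∃ α₀ : ℝ, 0 < α₀ ∧ ∀ a : ℝ, 0 < a → a ≤ α₀ →
      ∃ ε₀ : ℝ, 0 < ε₀ ∧ ∀ ε : ℝ, 0 < ε → ε ≤ ε₀ →
        ∃ t₀ : ℕ, ∀ t : ℕ, t₀ ≤ t →
          ∀ (B : Type) [DecidableEq B], ∀ (VR : Finset B) (ER : Finset (Finset B)),
            VR.card = t → (∀ e ∈ ER, e ⊆ VR ∧ e.card = k) →
            (∀ S ⊆ VR, S.card = d →
              (δ + μ) * (((t - d).choose (k - d) : ℕ) : ℝ)
                ≤ ((ER.filter fun e => S ⊆ e).card : ℝ)) →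
            ∀ I : Finset (Finset B), I ⊆ ER → (I.card : ℝ) ≤ ε * ((t.choose k : ℕ) : ℝ) →
              ∃ (VH : Finset B) (EH : Finset (Finset B)),
                VH ⊆ VR ∧ EH ⊆ ER ∧ (∀ e ∈ EH, e ⊆ VH) ∧ (∀ e ∈ EH, e ∉ I) ∧
                IsHamFramework k a γ δ VR VH EH

/-- `δ` has the `(k,d)`-Hamilton-vicinity property. -/
def HamVicinityProp (k d : ℕ) (δ : ℝ) : Prop :=
  ∀ μ : ℝ, 0 < μ → ∃ γ₀ : ℝ, 0 < γ₀ ∧ ∀ γ : ℝ, 0 < γ → γ ≤ γ₀ →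
    ∃ α₀ : ℝ, 0 < α₀ ∧ ∀ a : ℝ, 0 < a → a ≤ α₀ →
      ∃ t₀ : ℕ, ∀ t : ℕ, t₀ ≤ t →
        ∀ (B : Type) [DecidableEq B], ∀ (V : Finset B) (E : Finset (Finset B)),
          V.card = t → (∀ e ∈ E, e ⊆ V ∧ e.card = k) →
          PerturbedDegLB k d a (δ + μ) V E →
          (∀ v ∈ V, ∃ e ∈ E, v ∈ e) →
          ∃ C : Finset B → Finset (Finset B), IsHamVicinity k d γ δ V E C


private lemma choose_ratio_bound : ∀ (j s t : ℕ), j ≤ s → s ≤ t →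
    (s + 1 - j) ^ j * t.choose j ≤ s.choose j * t ^ j := by
  intro j
  induction j with
  | zero => simp
  | succ j ih =>
    intro s t hjs hst
    have hjs' : j ≤ s := le_trans (Nat.le_succ j) hjs
    have key := ih s t hjs' hst
    have h1 : t.choose (j + 1) * (j + 1) = t.choose j * (t - j) := Nat.choose_succ_right_eq t j
    have h2 : s.choose (j + 1) * (j + 1) = s.choose j * (s - j) := Nat.choose_succ_right_eq s j
    have expand : s + 1 - (j + 1) = s - j := by omega
    rw [expand]
    apply Nat.le_of_mul_le_mul_right _ (Nat.succ_pos j)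
    calc (s - j) ^ (j + 1) * t.choose (j + 1) * (j + 1)
        = (s - j) * ((s - j) ^ j * (t.choose (j + 1) * (j + 1))) := by ring
      _ = (s - j) * ((s - j) ^ j * (t.choose j * (t - j))) := by rw [h1]
      _ ≤ (s - j) * ((s + 1 - j) ^ j * (t.choose j * t)) := by
          gcongr <;> omega
      _ = (s - j) * (((s + 1 - j) ^ j * t.choose j) * t) := by ring
      _ ≤ (s - j) * ((s.choose j * t ^ j) * t) := by gcongr
      _ = s.choose j * (s - j) * t ^ (j + 1) := by ring
      _ = s.choose (j + 1) * (j + 1) * t ^ (j + 1) := by rw [← h2]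
      _ = s.choose (j + 1) * t ^ (j + 1) * (j + 1) := by ring

private lemma pow_sub_pow_le_n (a b : ℝ) (ha : a ≤ 1) (hb : 0 ≤ b) (hba : b ≤ a) :
    ∀ n : ℕ, a ^ n - b ^ n ≤ n * (a - b) := by
  intro n
  induction n with
  | zero => simp
  | succ n ih =>
    have hpow : b ^ n ≤ a ^ n := pow_le_pow_left₀ hb hba n
    have hbn : 0 ≤ b ^ n := pow_nonneg hb n
    have hb1 : b ^ n ≤ 1 := pow_le_one₀ hb (hba.trans ha)
    have e : a ^ (n + 1) - b ^ (n + 1) = a * (a ^ n - b ^ n) + b ^ n * (a - b) := by ring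
    have h1 : a * (a ^ n - b ^ n) ≤ a ^ n - b ^ n := by nlinarith
    have h2 : b ^ n * (a - b) ≤ a - b := by nlinarith
    push_cast
    nlinarith

private lemma shadow_card_lb {B : Type*} [DecidableEq B] (l : ℕ) (hl : 1 ≤ l)
    (V : Finset B) (C : Finset (Finset B))
    (hC : ∀ e ∈ C, e ⊆ V ∧ e.card = l) (s : ℕ) (hls : l ≤ s) (hst : s ≤ V.card)
    (hs : Nat.choose s l ≤ C.card) :
    Nat.choose s (l - 1) ≤ (_root_.shadow (l - 1) C).card := by
  set n := V.card with hn
  let g : {x // x ∈ V} ≃ Fin n := V.equivFin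
  let F : Finset B → Finset (Fin n) := fun e => (e.subtype (· ∈ V)).map g.toEmbedding
  let G : Finset (Fin n) → Finset B :=
    fun b => (b.map g.symm.toEmbedding).map (Function.Embedding.subtype (· ∈ V))
  have hGF : ∀ e : Finset B, e ⊆ V → G (F e) = e := by
    intro e he
    show ((((e.subtype (· ∈ V)).map g.toEmbedding).map g.symm.toEmbedding).map
      (Function.Embedding.subtype (· ∈ V))) = e
    rw [Finset.map_map, Finset.map_map]
    have hemb : g.toEmbedding.trans
        (g.symm.toEmbedding.trans (Function.Embedding.subtype (· ∈ V)))
        = Function.Embedding.subtype (· ∈ V) := by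
      ext x
      simp
    rw [hemb, Finset.subtype_map, Finset.filter_true_of_mem (fun x hx => he hx)]
  have hGcard : ∀ b : Finset (Fin n), (G b).card = b.card := by
    intro b
    simp [G, Finset.card_map]
  have hGinj : Function.Injective G := by
    intro a b hab
    have := Finset.map_injective (Function.Embedding.subtype (· ∈ V)) hab
    exact Finset.map_injective g.symm.toEmbedding this
  set 𝒜 : Finset (Finset (Fin n)) := C.image F with h𝒜
  have hFcard : ∀ e ∈ C, (F e).card = e.card := by
    intro e he
    rw [← hGcard (F e), hGF e (hC e he).1]
  have h𝒜card : 𝒜.card = C.card := by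
    apply Finset.card_image_of_injOn
    intro e1 h1 e2 h2 h12
    rw [← hGF e1 (hC e1 h1).1, ← hGF e2 (hC e2 h2).1, h12]
  have hsized : Set.Sized l (↑𝒜 : Set (Finset (Fin n))) := by
    intro a ha
    simp only [h𝒜, Finset.coe_image, Set.mem_image, Finset.mem_coe] at ha
    obtain ⟨e, he, rfl⟩ := ha
    rw [hFcard e he]
    exact (hC e he).2
  have kk := Finset.kruskal_katona_lovasz_form (i := 1) hl hls hst hsized
    (by rw [h𝒜card]; exact hs)
  rw [Function.iterate_one] at kk
  have hsub : (Finset.shadow 𝒜).image G ⊆ _root_.shadow (l - 1) C := by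
    intro b hb
    obtain ⟨a, ha, rfl⟩ := Finset.mem_image.1 hb
    obtain ⟨u, hu, x, hx, hux⟩ := Finset.mem_shadow_iff.1 ha
    obtain ⟨e, he, rfl⟩ := Finset.mem_image.1 hu
    refine Finset.mem_biUnion.2 ⟨e, he, Finset.mem_powersetCard.2 ⟨?_, ?_⟩⟩
    · have h1 : a ⊆ F e := by rw [← hux]; exact Finset.erase_subset _ _
      have h2 : G a ⊆ G (F e) := by
        apply Finset.map_subset_map.2
        exact Finset.map_subset_map.2 h1
      rwa [hGF e (hC e he).1] at h2
    · rw [hGcard, ← hux, Finset.card_erase_of_mem hx, hFcard e he, (hC e he).2]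
  calc Nat.choose s (l - 1) ≤ (Finset.shadow 𝒜).card := by convert kk using 2 <;> congr!
    _ = ((Finset.shadow 𝒜).image G).card := (Finset.card_image_of_injective _ hGinj).symm
    _ ≤ (_root_.shadow (l - 1) C).card := Finset.card_le_card hsub

set_option maxHeartbeats 2000000 in
/-- density of ratio-dense subgraphs. -/
theorem dense_subgraph_density (l : ℕ) (hl : 2 ≤ l) (δ ε : ℝ) (hδ : 0 < δ) (hδ1 : δ ≤ 1)
    (hε : 0 < ε) :
    ∃ t₀ : ℕ, ∀ t : ℕ, t₀ ≤ t →
      ∀ (B : Type) [DecidableEq B], ∀ (V : Finset B) (E C : Finset (Finset B)),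
        V.card = t → (∀ e ∈ E, e ⊆ V ∧ e.card = l) → C ⊆ E → C.Nonempty →
        (E.card : ℝ) = δ * ((t.choose l : ℕ) : ℝ) →
        ∀ ν ν' : ℝ, (C.card : ℝ) = ν * ((t.choose l : ℕ) : ℝ) →
          ((shadow (l - 1) C).card : ℝ) = ν' * ((t.choose (l - 1) : ℕ) : ℝ) →
          δ * ν' ≤ ν →
          δ ^ l - ε ≤ ν := by
  refine ⟨l + ⌈(2 * (l : ℝ) ^ 2) / ε⌉₊ + ⌈(2 * (l : ℝ)) / δ⌉₊ + 1, ?_⟩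
  intro t ht B _ V E C hV hE hCE hCne hEcard ν ν' hν hν' hratio
  have hl1 : 1 ≤ l := le_trans (by norm_num) hl
  have htl : l ≤ t := by omega
  have ht0 : 0 < t := by omega
  have ht0R : (0:ℝ) < t := by exact_mod_cast ht0
  have hC : ∀ e ∈ C, e ⊆ V ∧ e.card = l := fun e he => hE e (hCE he)
  have hC1 : 1 ≤ C.card := Finset.card_pos.2 hCne
  have hchoosetl : 0 < t.choose l := Nat.choose_pos htl
  have hchoosetlR : (0:ℝ) < t.choose l := by exact_mod_cast hchoosetl
  have htl1 : l - 1 ≤ t := by omega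
  have hchoosetl1 : 0 < t.choose (l - 1) := Nat.choose_pos htl1
  have hchoosetl1R : (0:ℝ) < t.choose (l - 1) := by exact_mod_cast hchoosetl1
  -- the parameter s
  have hex : ∃ s : ℕ, l ≤ s ∧ s ≤ t ∧ Nat.choose s l ≤ C.card ∧
      (s < t → C.card < Nat.choose (s + 1) l) := by
    have hPl : Nat.choose l l ≤ C.card := by simpa [Nat.choose_self] using hC1
    refine ⟨Nat.findGreatest (fun m => Nat.choose m l ≤ C.card) t,
      Nat.le_findGreatest (P := fun m => Nat.choose m l ≤ C.card) htl hPl,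
      Nat.findGreatest_le t,
      Nat.findGreatest_spec (P := fun m => Nat.choose m l ≤ C.card) htl hPl, ?_⟩
    intro hlt
    have hng := Nat.findGreatest_is_greatest
      (P := fun m => Nat.choose m l ≤ C.card)
      (k := Nat.findGreatest (fun m => Nat.choose m l ≤ C.card) t + 1) (n := t)
      (by omega) (by omega)
    exact Nat.lt_of_not_le hng
  obtain ⟨s, hls, hst, hsspec, hsmaxf⟩ := hex
  by_cases hseq : s = t
  · -- ν ≥ 1
    have h1 : (t.choose l : ℝ) ≤ ν * t.choose l := by
      rw [← hν]; exact_mod_cast (hseq ▸ hsspec)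
    have hν1 : 1 ≤ ν := le_of_mul_le_mul_right (by linarith) hchoosetlR
    have : δ ^ l ≤ 1 := pow_le_one₀ (le_of_lt hδ) hδ1
    linarith
  have hslt : s < t := lt_of_le_of_ne hst hseq
  have hsupR : (C.card : ℝ) < Nat.choose (s + 1) l := by
    exact_mod_cast hsmaxf hslt
  -- shadow lower bound via Kruskal-Katona
  have hshadow : Nat.choose s (l - 1) ≤ (shadow (l - 1) C).card :=
    shadow_card_lb l hl1 V C hC s hls (hV ▸ hst) hsspec
  have hν'lb : (Nat.choose s (l - 1) : ℝ) ≤ ν' * t.choose (l - 1) := by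
    rw [← hν']; exact_mod_cast hshadow
  -- key inequality: δ (t - l + 1) < s + 1
  have hsl1 : l - 1 ≤ s := by omega
  have hcsl1 : 0 < s.choose (l - 1) := Nat.choose_pos hsl1
  have hcsl1R : (0:ℝ) < s.choose (l - 1) := by exact_mod_cast hcsl1
  have hA : δ * s.choose (l - 1) * t.choose l < (Nat.choose (s + 1) l : ℝ) * t.choose (l - 1) := by
    have h1 : δ * s.choose (l - 1) ≤ δ * (ν' * t.choose (l - 1)) :=
      mul_le_mul_of_nonneg_left hν'lb (le_of_lt hδ)
    have h2 : δ * (ν' * t.choose (l - 1)) * t.choose l ≤ ν * t.choose (l - 1) * t.choose l := by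
      have : δ * ν' * t.choose (l - 1) ≤ ν * t.choose (l - 1) :=
        mul_le_mul_of_nonneg_right hratio (le_of_lt hchoosetl1R)
      nlinarith
    have h3 : ν * t.choose l * t.choose (l - 1) < (Nat.choose (s + 1) l : ℝ) * t.choose (l - 1) := by
      rw [← hν]
      exact mul_lt_mul_of_pos_right hsupR hchoosetl1R
    nlinarith
  have hid1 : (t.choose l : ℝ) * l = t.choose (l - 1) * ((t : ℝ) - l + 1) := by
    have := Nat.choose_succ_right_eq t (l - 1)
    have hrw : l - 1 + 1 = l := by omega
    rw [hrw] at this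
    have hcast : ((t.choose l * l : ℕ) : ℝ) = ((t.choose (l - 1) * (t - (l - 1)) : ℕ) : ℝ) := by
      exact_mod_cast congrArg (Nat.cast (R := ℝ)) this
    push_cast [Nat.cast_sub htl1] at hcast
    push_cast [Nat.cast_sub hl1] at hcast
    linarith [hcast]
  have hid2 : (Nat.choose (s + 1) l : ℝ) * l = ((s : ℝ) + 1) * s.choose (l - 1) := by
    have := Nat.add_one_mul_choose_eq s (l - 1)
    have hrw : l - 1 + 1 = l := by omega
    simp only [Nat.succ_eq_add_one, hrw] at this
    exact_mod_cast this.symm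
  have hkey : δ * ((t : ℝ) - l + 1) < (s : ℝ) + 1 := by
    have hlpos : (0:ℝ) < l := by exact_mod_cast (by omega : 0 < l)
    have hmul := mul_lt_mul_of_pos_right hA hlpos
    have e1 : δ * s.choose (l - 1) * t.choose l * l
        = (δ * ((t : ℝ) - l + 1)) * (s.choose (l - 1) * t.choose (l - 1)) := by
      rw [mul_assoc (δ * (s.choose (l-1) : ℝ))]
      rw [hid1]; ring
    have e2 : (Nat.choose (s + 1) l : ℝ) * t.choose (l - 1) * l
        = ((s : ℝ) + 1) * (s.choose (l - 1) * t.choose (l - 1)) := by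
      rw [mul_comm ((Nat.choose (s+1) l : ℝ)) ((t.choose (l-1) : ℝ)), mul_assoc, hid2]; ring
    rw [e1, e2] at hmul
    have hpos2 : (0:ℝ) ≤ (s.choose (l - 1) : ℝ) * (t.choose (l - 1) : ℝ) := by positivity
    exact lt_of_mul_lt_mul_right hmul hpos2
  -- now the ratio bound
  set s' : ℕ := s + 1 - (l - 1) with hs'def
  have hs'cast : (s' : ℝ) = (s : ℝ) + 1 - ((l : ℝ) - 1) := by
    have : ((s + 1 - (l - 1) : ℕ) : ℝ) = ((s + 1 : ℕ) : ℝ) - ((l - 1 : ℕ) : ℝ) := by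
      exact_mod_cast Nat.cast_sub (by omega : l - 1 ≤ s + 1)
    rw [hs'def, this]
    push_cast [Nat.cast_sub hl1]
    ring
  have hratio_nat := choose_ratio_bound (l - 1) s t hsl1 hst
  have hratioR : ((s' : ℝ)) ^ (l - 1) * t.choose (l - 1)
      ≤ (s.choose (l - 1) : ℝ) * (t : ℝ) ^ (l - 1) := by
    exact_mod_cast hratio_nat
  have htpow : (0:ℝ) < (t : ℝ) ^ (l - 1) := by positivity
  have hdivle : ((s' : ℝ) / t) ^ (l - 1) ≤ (s.choose (l - 1) : ℝ) / t.choose (l - 1) := by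
    rw [div_pow, div_le_div_iff₀ htpow hchoosetl1R]
    linarith [hratioR]
  -- bounds from t large
  have ht1 : (2 * (l : ℝ) ^ 2) / ε ≤ t := by
    have hc1 : ⌈(2 * (l : ℝ) ^ 2) / ε⌉₊ ≤ t := by omega
    have h1 : (⌈(2 * (l : ℝ) ^ 2) / ε⌉₊ : ℝ) ≤ (t : ℝ) := Nat.cast_le.2 hc1
    linarith [Nat.le_ceil ((2 * (l : ℝ) ^ 2) / ε)]
  have ht2 : (2 * (l : ℝ)) / δ ≤ t := by
    have hc1 : ⌈(2 * (l : ℝ)) / δ⌉₊ ≤ t := by omega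
    have h1 : (⌈(2 * (l : ℝ)) / δ⌉₊ : ℝ) ≤ (t : ℝ) := Nat.cast_le.2 hc1
    linarith [Nat.le_ceil ((2 * (l : ℝ)) / δ)]
  set c : ℝ := 2 * l / t with hcdef
  have hlR : (2:ℝ) ≤ l := by exact_mod_cast hl
  have hcpos : 0 < c := by positivity
  have hcδ : c ≤ δ := by
    rw [hcdef, div_le_iff₀ ht0R]
    have := (div_le_iff₀ hδ).1 ht2
    linarith
  -- s'/t ≥ δ - c
  have hs't : δ - c ≤ (s' : ℝ) / t := by
    rw [le_div_iff₀ ht0R, hs'cast]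
    have expand : (δ - c) * t = δ * t - 2 * l := by
      rw [hcdef]; field_simp
    rw [expand]
    have h1 : δ * ((t : ℝ) - l + 1) ≤ (s : ℝ) + 1 := le_of_lt hkey
    have h2 : δ * (l : ℝ) ≤ l := by nlinarith
    nlinarith
  have hδc : 0 ≤ δ - c := by linarith
  -- chain
  have hchain1 : (δ - c) ^ (l - 1) ≤ ((s' : ℝ) / t) ^ (l - 1) :=
    pow_le_pow_left₀ hδc hs't (l - 1)
  have hν'lb2 : (s.choose (l - 1) : ℝ) / t.choose (l - 1) ≤ ν' := by
    rw [div_le_iff₀ hchoosetl1R]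
    linarith
  have hνlb : δ * (δ - c) ^ (l - 1) ≤ ν := by
    have h1 : δ * (δ - c) ^ (l - 1) ≤ δ * ν' := by
      apply mul_le_mul_of_nonneg_left _ (le_of_lt hδ)
      calc (δ - c) ^ (l - 1) ≤ ((s' : ℝ) / t) ^ (l - 1) := hchain1
        _ ≤ (s.choose (l - 1) : ℝ) / t.choose (l - 1) := hdivle
        _ ≤ ν' := hν'lb2
    linarith
  -- Lipschitz bound on powers
  have hlip := pow_sub_pow_le_n δ (δ - c) hδ1 hδc (by linarith) (l - 1)
  have hcε : ((l : ℝ) - 1) * c ≤ ε := by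
    have : ((l - 1 : ℕ) : ℝ) * c ≤ (l : ℝ) * c := by
      apply mul_le_mul_of_nonneg_right _ (le_of_lt hcpos)
      push_cast [Nat.cast_sub hl1]; linarith
    have h2 : (l : ℝ) * c = 2 * l ^ 2 / t := by rw [hcdef]; ring
    have h3 : 2 * (l : ℝ) ^ 2 / t ≤ ε := by
      rw [div_le_iff₀ ht0R]
      have := (div_le_iff₀ hε).1 ht1
      linarith
    push_cast [Nat.cast_sub hl1]
    nlinarith [hcpos]
  have hfinal : δ ^ l - ε ≤ δ * (δ - c) ^ (l - 1) := by
    have hδpow : δ ^ l = δ * δ ^ (l - 1) := by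
      rw [← pow_succ']
      congr 1
      omega
    have hcast : ((l - 1 : ℕ) : ℝ) = (l : ℝ) - 1 := by
      push_cast [Nat.cast_sub hl1]; ring
    rw [hcast] at hlip
    have h1 : δ * (δ ^ (l - 1) - (δ - c) ^ (l - 1)) ≤ ((l : ℝ) - 1) * c := by
      have hd : δ ^ (l - 1) - (δ - c) ^ (l - 1) ≤ ((l : ℝ) - 1) * (δ - (δ - c)) := hlip
      have : δ - (δ - c) = c := by ring
      rw [this] at hd
      have hnn : 0 ≤ δ ^ (l - 1) - (δ - c) ^ (l - 1) := by
        have := pow_le_pow_left₀ hδc (by linarith : δ - c ≤ δ) (l - 1)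
        linarith
      nlinarith
    rw [hδpow]
    nlinarith [h1, hcε]
  linarith
end

section
/- (Existence of switchers.) For every integer ℓ ≥ 2 and every μ > 0 there exists t_0 such that for all t ≥ t_0 the following holds. Set δ = ℓ/(ℓ + 2·sqrt(ℓ−1)). Let L be an ℓ-graph on t vertices with edge density at least δ + μ, and let C be a vertex-spanning subgraph of L with at least one edge whose edge density ν and whose shadow ∂(C)'s edge density ν' satisfy ν ≥ (δ + μ)·ν'. Then C contains a switcher. -/
open Finset

variable {A : Type*} [DecidableEq A]

/-- Degree of a set in a hypergraph. -/
def degC {B : Type*} [DecidableEq B] (C : Finset (Finset B)) (S : Finset B) : ℕ :=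
  (C.filter fun e => S ⊆ e).card

lemma aux_key_ineq (s T u v : ℝ) (hu : 0 < u) (hv : 0 < v) (hT : T = u + v) :
    (1+s)^2 / T ≤ s^2 / u + 1 / v := by
  subst hT
  rw [div_add_div _ _ (ne_of_gt hu) (ne_of_gt hv),
    div_le_div_iff₀ (by positivity) (by positivity)]
  nlinarith [sq_nonneg (s*v - u)]

lemma aux_sum_sum_erase {B : Type*} [DecidableEq B] {l : ℕ} (hl : 1 ≤ l)
    (C : Finset (Finset B)) (hC : ∀ e ∈ C, e.card = l) (f : Finset B → ℝ) :
    ∑ A ∈ C, ∑ a ∈ A, f (A.erase a)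
      = ∑ S ∈ shadow (l-1) C, (degC C S : ℝ) * f S := by
  have step1 : ∀ A ∈ C, ∑ a ∈ A, f (A.erase a) = ∑ S ∈ A.powersetCard (l-1), f S := by
    intro A hA
    refine Finset.sum_bij (fun a _ => A.erase a) ?_ ?_ ?_ ?_
    · intro a ha
      rw [Finset.mem_powersetCard]
      exact ⟨Finset.erase_subset _ _, by rw [Finset.card_erase_of_mem ha, hC A hA]⟩
    · intro a ha b hb h
      exact (Finset.erase_inj A ha).mp h
    · intro S hS
      rw [Finset.mem_powersetCard] at hS
      have h1 : (A \ S).card = 1 := by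
        rw [Finset.card_sdiff_of_subset hS.1, hC A hA, hS.2]
        omega
      obtain ⟨a, ha⟩ := Finset.card_eq_one.mp h1
      have haA : a ∈ A := by
        have : a ∈ A \ S := ha ▸ Finset.mem_singleton_self a
        exact (Finset.mem_sdiff.mp this).1
      refine ⟨a, haA, ?_⟩
      show A.erase a = S
      rw [Finset.erase_eq, ← ha, Finset.sdiff_sdiff_self_left]
      exact Finset.inter_eq_right.mpr hS.1
    · intro a ha; rfl
  have step2 : ∀ A ∈ C, A.powersetCard (l-1) = (shadow (l-1) C).filter (fun S => S ⊆ A) := by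
    intro A hA
    ext S
    simp only [Finset.mem_powersetCard, Finset.mem_filter, _root_.shadow, Finset.mem_biUnion]
    constructor
    · rintro ⟨hsub, hcard⟩
      exact ⟨⟨A, hA, hsub, hcard⟩, hsub⟩
    · rintro ⟨⟨e, he, hmem⟩, hsub⟩
      exact ⟨hsub, hmem.2⟩
  calc ∑ A ∈ C, ∑ a ∈ A, f (A.erase a)
      = ∑ A ∈ C, ∑ S ∈ (shadow (l-1) C).filter (fun S => S ⊆ A), f S := by
        refine Finset.sum_congr rfl fun A hA => ?_
        rw [step1 A hA, step2 A hA]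
    _ = ∑ A ∈ C, ∑ S ∈ shadow (l-1) C, if S ⊆ A then f S else 0 := by
        refine Finset.sum_congr rfl fun A hA => ?_
        rw [Finset.sum_filter]
    _ = ∑ S ∈ shadow (l-1) C, ∑ A ∈ C, if S ⊆ A then f S else 0 := Finset.sum_comm
    _ = ∑ S ∈ shadow (l-1) C, (degC C S : ℝ) * f S := by
        refine Finset.sum_congr rfl fun S hS => ?_
        rw [← Finset.sum_filter, Finset.sum_const, nsmul_eq_mul]
        rfl

/-- existence of switchers. -/
theorem switcher_existence (l : ℕ) (hl : 2 ≤ l) (μ : ℝ) (hμ : 0 < μ) :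
    ∃ t₀ : ℕ, ∀ t : ℕ, t₀ ≤ t →
      ∀ (B : Type) [DecidableEq B], ∀ (V : Finset B) (E C : Finset (Finset B)),
        V.card = t → (∀ e ∈ E, e ⊆ V ∧ e.card = l) → C ⊆ E → C.Nonempty →
        ((l : ℝ) / ((l : ℝ) + 2 * Real.sqrt ((l : ℝ) - 1)) + μ) * ((t.choose l : ℕ) : ℝ)
          ≤ (E.card : ℝ) →
        ((l : ℝ) / ((l : ℝ) + 2 * Real.sqrt ((l : ℝ) - 1)) + μ)
            * (((shadow (l - 1) C).card : ℕ) : ℝ) * ((t.choose l : ℕ) : ℝ)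
          ≤ (C.card : ℝ) * ((t.choose (l - 1) : ℕ) : ℝ) →
        HasSwitcher C := by
  obtain ⟨m, hm⟩ := exists_nat_gt (2 / μ)
  refine ⟨l + m, fun t ht B _ V E C hV hE hCE hCne hdens hratio => ?_⟩
  by_contra hsw
  rw [HasSwitcher] at hsw
  push_neg at hsw
  set s : ℝ := Real.sqrt ((l:ℝ) - 1) with hs_def
  have hl1 : (2:ℝ) ≤ (l:ℝ) := by exact_mod_cast hl
  have hs0 : 0 ≤ s := Real.sqrt_nonneg _
  have hs2 : s ^ 2 = (l:ℝ) - 1 := Real.sq_sqrt (by linarith)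
  set δ : ℝ := (l:ℝ) / ((l:ℝ) + 2 * s) with hδ_def
  have hden_pos : 0 < (l:ℝ) + 2 * s := by linarith
  have hδpos : 0 < δ := div_pos (by linarith) hden_pos
  have hδ1 : δ ≤ 1 := by rw [hδ_def, div_le_one hden_pos]; linarith
  have hδl : δ * ((l:ℝ) + 2 * s) = l := div_mul_cancel₀ _ (ne_of_gt hden_pos)
  have hCcard : ∀ e ∈ C, e.card = l := fun e he => (hE e (hCE he)).2
  have hCsub : ∀ e ∈ C, e ⊆ V := fun e he => (hE e (hCE he)).1
  have hlt : l ≤ t := by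
    obtain ⟨e, he⟩ := hCne
    calc l = e.card := (hCcard e he).symm
      _ ≤ V.card := Finset.card_le_card (hCsub e he)
      _ = t := hV
  have htR : (l:ℝ) ≤ (t:ℝ) := by exact_mod_cast hlt
  set T : ℝ := (t:ℝ) - l + 2 with hT_def
  have hT2 : (2:ℝ) ≤ T := by rw [hT_def]; linarith
  have hd1 : ∀ A ∈ C, ∀ a ∈ A, 1 ≤ degC C (A.erase a) := by
    intro A hA a ha
    exact Finset.card_pos.mpr ⟨A, Finset.mem_filter.mpr ⟨hA, Finset.erase_subset _ _⟩⟩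
  -- Per-edge inequality
  have key : ∀ A ∈ C,
      ∑ a ∈ A, ((degC C (A.erase a) : ℝ) - δ * T) / (degC C (A.erase a) : ℝ) ≤ 0 := by
    intro A hA
    have hAne : A.Nonempty := Finset.card_pos.mp (by rw [hCcard A hA]; omega)
    obtain ⟨a₀, ha₀, hmax⟩ := Finset.exists_max_image A (fun a => degC C (A.erase a)) hAne
    obtain ⟨b, hb, hbprop⟩ := hsw A hA a₀ ha₀
    have hcount : ∀ x ∈ A, degC C (A.erase x)
        ≤ ((V \ A).filter (fun c => insert c (A.erase x) ∈ C)).card + 1 := by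
      intro x hx
      have hAmem : A ∈ C.filter fun e => A.erase x ⊆ e :=
        Finset.mem_filter.mpr ⟨hA, Finset.erase_subset _ _⟩
      have hsub : (C.filter fun e => A.erase x ⊆ e).erase A ⊆
          ((V \ A).filter (fun c => insert c (A.erase x) ∈ C)).image
            (fun c => insert c (A.erase x)) := by
        intro e he
        rw [Finset.mem_erase, Finset.mem_filter] at he
        obtain ⟨hne, heC, hse⟩ := he
        have hcard1 : (e \ A.erase x).card = 1 := by
          rw [Finset.card_sdiff_of_subset hse, hCcard e heC, Finset.card_erase_of_mem hx, hCcard A hA]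
          omega
        obtain ⟨c, hc⟩ := Finset.card_eq_one.mp hcard1
        have hce : c ∈ e := by
          have : c ∈ e \ A.erase x := hc ▸ Finset.mem_singleton_self c
          exact (Finset.mem_sdiff.mp this).1
        have hee := (Finset.union_sdiff_of_subset hse).symm
        rw [hc, Finset.union_comm, ← Finset.insert_eq] at hee
        have hcA : c ∉ A := by
          intro hcA
          apply hne
          have hsubA : e ⊆ A := by
            rw [hee]
            intro y hy
            rcases Finset.mem_insert.mp hy with h | h
            · rwa [h]
            · exact Finset.mem_of_mem_erase h
          exact Finset.eq_of_subset_of_card_le hsubA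
            (by rw [hCcard e heC, hCcard A hA])
        exact Finset.mem_image.mpr ⟨c, Finset.mem_filter.mpr
          ⟨Finset.mem_sdiff.mpr ⟨hCsub e heC hce, hcA⟩, hee ▸ heC⟩, hee.symm⟩
      have h1 : ((C.filter fun e => A.erase x ⊆ e).erase A).card + 1
          = (C.filter fun e => A.erase x ⊆ e).card := Finset.card_erase_add_one hAmem
      have h2 : ((C.filter fun e => A.erase x ⊆ e).erase A).card
          ≤ ((V \ A).filter (fun c => insert c (A.erase x) ∈ C)).card :=
        le_trans (Finset.card_le_card hsub) Finset.card_image_le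
      have h3 : degC C (A.erase x) = (C.filter fun e => A.erase x ⊆ e).card := rfl
      omega
    have hsumnat : degC C (A.erase a₀) + degC C (A.erase b) ≤ t - l + 2 := by
      have hdisj : Disjoint ((V \ A).filter (fun c => insert c (A.erase a₀) ∈ C))
          ((V \ A).filter (fun c => insert c (A.erase b) ∈ C)) := by
        rw [Finset.disjoint_left]
        intro c hca hcb
        rw [Finset.mem_filter] at hca hcb
        exact hbprop c (Finset.mem_sdiff.mp hca.1).2 hca.2 hcb.2
      have hunion : ((V \ A).filter (fun c => insert c (A.erase a₀) ∈ C)).card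
          + ((V \ A).filter (fun c => insert c (A.erase b) ∈ C)).card ≤ t - l := by
        have h1 := Finset.card_union_of_disjoint hdisj
        have h2 : ((V \ A).filter (fun c => insert c (A.erase a₀) ∈ C))
            ∪ ((V \ A).filter (fun c => insert c (A.erase b) ∈ C)) ⊆ V \ A :=
          Finset.union_subset (Finset.filter_subset _ _) (Finset.filter_subset _ _)
        have h3 : (V \ A).card = t - l := by
          rw [Finset.card_sdiff_of_subset (hCsub A hA), hCcard A hA, hV]
        have h4 := Finset.card_le_card h2
        omega
      have ha' := hcount a₀ ha₀
      have hb' := hcount b hb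
      omega
    -- move to the reals
    have hD1 : (1:ℝ) ≤ (degC C (A.erase a₀) : ℝ) := by exact_mod_cast hd1 A hA a₀ ha₀
    have hdb1 : (1:ℝ) ≤ (degC C (A.erase b) : ℝ) := by exact_mod_cast hd1 A hA b hb
    have hDdb : (degC C (A.erase a₀) : ℝ) + (degC C (A.erase b) : ℝ) ≤ T := by
      have h5 : ((degC C (A.erase a₀) + degC C (A.erase b) : ℕ) : ℝ)
          ≤ ((t - l + 2 : ℕ) : ℝ) := by exact_mod_cast hsumnat
      rw [hT_def]
      push_cast [Nat.cast_sub hlt] at h5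
      linarith
    have hvpos : 0 < T - (degC C (A.erase a₀) : ℝ) := by linarith
    have hDpos : (0:ℝ) < (degC C (A.erase a₀) : ℝ) := by linarith
    have hinv : ((l:ℝ) + 2 * s) / T ≤ ∑ a ∈ A, 1 / (degC C (A.erase a) : ℝ) := by
      have h1 : (1+s)^2 / T ≤ s^2 / (degC C (A.erase a₀) : ℝ)
          + 1 / (T - (degC C (A.erase a₀) : ℝ)) :=
        aux_key_ineq s T _ _ hDpos hvpos (by ring)
      have h2 : (1+s)^2 = (l:ℝ) + 2 * s := by linear_combination hs2
      have h3 : ∀ a ∈ A.erase b,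
          1 / (degC C (A.erase a₀) : ℝ) ≤ 1 / (degC C (A.erase a) : ℝ) := by
        intro a ha
        have haA : a ∈ A := Finset.mem_of_mem_erase ha
        have hpos : (0:ℝ) < (degC C (A.erase a) : ℝ) := by
          have := hd1 A hA a haA
          exact_mod_cast Nat.lt_of_lt_of_le Nat.zero_lt_one this
        have hle : (degC C (A.erase a) : ℝ) ≤ (degC C (A.erase a₀) : ℝ) := by
          exact_mod_cast hmax a haA
        exact one_div_le_one_div_of_le hpos hle
      have h4 : ((A.erase b).card : ℝ) * (1 / (degC C (A.erase a₀) : ℝ))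
          ≤ ∑ a ∈ A.erase b, 1 / (degC C (A.erase a) : ℝ) := by
        rw [← nsmul_eq_mul]
        exact Finset.card_nsmul_le_sum _ _ _ h3
      have h5 : 1 / (T - (degC C (A.erase a₀) : ℝ)) ≤ 1 / (degC C (A.erase b) : ℝ) :=
        one_div_le_one_div_of_le (by linarith) (by linarith)
      have h6 : ((A.erase b).card : ℝ) = (l:ℝ) - 1 := by
        rw [Finset.card_erase_of_mem hb, hCcard A hA]
        push_cast [Nat.cast_sub (by omega : 1 ≤ l)]
        ring
      have h7 : ∑ a ∈ A, 1 / (degC C (A.erase a) : ℝ)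
          = (∑ a ∈ A.erase b, 1 / (degC C (A.erase a) : ℝ))
            + 1 / (degC C (A.erase b) : ℝ) := (Finset.sum_erase_add A _ hb).symm
      have h8 : s^2 / (degC C (A.erase a₀) : ℝ)
          = ((l:ℝ) - 1) * (1 / (degC C (A.erase a₀) : ℝ)) := by
        rw [hs2]; ring
      rw [h7, ← h2]
      calc (1+s)^2 / T
          ≤ s^2 / (degC C (A.erase a₀) : ℝ) + 1 / (T - (degC C (A.erase a₀) : ℝ)) := h1
        _ ≤ ((l:ℝ) - 1) * (1 / (degC C (A.erase a₀) : ℝ))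
            + 1 / (degC C (A.erase b) : ℝ) := by rw [← h8]; linarith
        _ ≤ (∑ a ∈ A.erase b, 1 / (degC C (A.erase a) : ℝ))
            + 1 / (degC C (A.erase b) : ℝ) := by rw [← h6] at *; linarith
    -- conclude the per-edge bound
    have hterm : ∀ a ∈ A, ((degC C (A.erase a) : ℝ) - δ * T) / (degC C (A.erase a) : ℝ)
        = 1 - δ * T * (1 / (degC C (A.erase a) : ℝ)) := by
      intro a ha
      have hpos : (0:ℝ) < (degC C (A.erase a) : ℝ) := by
        have := hd1 A hA a ha
        exact_mod_cast Nat.lt_of_lt_of_le Nat.zero_lt_one this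
      field_simp
    rw [Finset.sum_congr rfl hterm, Finset.sum_sub_distrib, Finset.sum_const,
      ← Finset.mul_sum, nsmul_eq_mul, mul_one, hCcard A hA]
    have h9 : δ * T * (((l:ℝ) + 2 * s) / T) ≤ δ * T * ∑ a ∈ A, 1 / (degC C (A.erase a) : ℝ) :=
      mul_le_mul_of_nonneg_left hinv (by positivity)
    have hTne : T ≠ 0 := by intro h; rw [h] at hT2; linarith
    have h10 : δ * T * (((l:ℝ) + 2 * s) / T) = (l:ℝ) := by
      calc δ * T * (((l:ℝ) + 2 * s) / T) = δ * (((l:ℝ) + 2 * s) * (T / T)) := by ring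
        _ = δ * ((l:ℝ) + 2 * s) := by rw [div_self hTne, mul_one]
        _ = (l:ℝ) := hδl
    linarith
  -- Global consequence
  have hl1' : 1 ≤ l := by omega
  have hglob1 : ∑ S ∈ shadow (l-1) C,
      (degC C S : ℝ) * (((degC C S : ℝ) - δ * T) / (degC C S : ℝ)) ≤ 0 := by
    rw [← aux_sum_sum_erase hl1' C hCcard (fun S => ((degC C S : ℝ) - δ * T) / (degC C S : ℝ))]
    exact Finset.sum_nonpos key
  have hdS1 : ∀ S ∈ shadow (l-1) C, 1 ≤ degC C S := by
    intro S hS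
    rw [_root_.shadow, Finset.mem_biUnion] at hS
    obtain ⟨e, he, hmem⟩ := hS
    rw [Finset.mem_powersetCard] at hmem
    exact Finset.card_pos.mpr ⟨e, Finset.mem_filter.mpr ⟨he, hmem.1⟩⟩
  have hglob2 : ∑ S ∈ shadow (l-1) C, ((degC C S : ℝ) - δ * T) ≤ 0 := by
    calc ∑ S ∈ shadow (l-1) C, ((degC C S : ℝ) - δ * T)
        = ∑ S ∈ shadow (l-1) C,
            (degC C S : ℝ) * (((degC C S : ℝ) - δ * T) / (degC C S : ℝ)) := by
          refine Finset.sum_congr rfl fun S hS => ?_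
          have hpos : ((degC C S : ℝ)) ≠ 0 := by
            have h := hdS1 S hS
            have : (0:ℝ) < (degC C S : ℝ) := by exact_mod_cast Nat.lt_of_lt_of_le Nat.zero_lt_one h
            linarith
          field_simp
      _ ≤ 0 := hglob1
  have hsumdeg : ∑ S ∈ shadow (l-1) C, (degC C S : ℝ) = (l:ℝ) * C.card := by
    have h := aux_sum_sum_erase hl1' C hCcard (fun _ => (1:ℝ))
    simp only [mul_one] at h
    rw [← h]
    rw [Finset.sum_congr rfl (fun A hA => by
      rw [Finset.sum_const, nsmul_eq_mul, mul_one, hCcard A hA]),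
      Finset.sum_const, nsmul_eq_mul]
    ring
  have hmain : (l:ℝ) * C.card ≤ δ * T * ((shadow (l-1) C).card : ℝ) := by
    rw [Finset.sum_sub_distrib, Finset.sum_const, nsmul_eq_mul, hsumdeg] at hglob2
    linarith
  -- Final arithmetic
  have hP1 : (1:ℝ) ≤ ((shadow (l-1) C).card : ℝ) := by
    obtain ⟨e, he⟩ := hCne
    obtain ⟨S, hSe, hScard⟩ := Finset.exists_subset_card_eq (s := e) (n := l-1)
      (by rw [hCcard e he]; omega)
    have : S ∈ shadow (l-1) C := by
      rw [_root_.shadow, Finset.mem_biUnion]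
      exact ⟨e, he, Finset.mem_powersetCard.mpr ⟨hSe, hScard⟩⟩
    exact_mod_cast Finset.card_pos.mpr ⟨S, this⟩
  have hQ1 : (1:ℝ) ≤ ((t.choose (l-1) : ℕ) : ℝ) := by
    exact_mod_cast Nat.choose_pos (by omega : l - 1 ≤ t)
  have hch : ((t.choose l : ℕ) : ℝ) * l = ((t.choose (l-1) : ℕ) : ℝ) * ((t:ℝ) - l + 1) := by
    have h := Nat.choose_succ_right_eq t (l-1)
    rw [Nat.sub_add_cancel hl1'] at h
    have h2 : ((t.choose l * l : ℕ) : ℝ) = ((t.choose (l-1) * (t - (l-1)) : ℕ) : ℝ) := by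
      exact_mod_cast congrArg (Nat.cast (R := ℝ)) h
    push_cast [Nat.cast_sub (by omega : l - 1 ≤ t), Nat.cast_sub hl1'] at h2
    linarith
  set P : ℝ := ((shadow (l-1) C).card : ℝ) with hP_def
  set X : ℝ := ((t.choose l : ℕ) : ℝ) with hX_def
  set Q : ℝ := ((t.choose (l-1) : ℕ) : ℝ) with hQ_def
  have hPQpos : (0:ℝ) < P * Q := by nlinarith
  have hstep : ((δ + μ) * ((t:ℝ) - l + 1)) * (P * Q) ≤ (δ * T) * (P * Q) := by
    have e1 : ((δ + μ) * ((t:ℝ) - l + 1)) * (P * Q) = ((δ + μ) * P * X) * l := by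
      linear_combination (-((δ + μ) * P)) * hch
    have e2 : ((δ + μ) * P * X) * l ≤ ((C.card : ℝ) * Q) * l := by
      have hlpos : (0:ℝ) < l := by linarith
      exact mul_le_mul_of_nonneg_right hratio (le_of_lt hlpos)
    have e3 : ((C.card : ℝ) * Q) * l = ((l:ℝ) * C.card) * Q := by ring
    have e4 : ((l:ℝ) * C.card) * Q ≤ (δ * T * P) * Q :=
      mul_le_mul_of_nonneg_right hmain (by linarith)
    calc ((δ + μ) * ((t:ℝ) - l + 1)) * (P * Q) = ((δ + μ) * P * X) * l := e1
      _ ≤ ((C.card : ℝ) * Q) * l := e2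
      _ = ((l:ℝ) * C.card) * Q := e3
      _ ≤ (δ * T * P) * Q := e4
      _ = (δ * T) * (P * Q) := by ring
  have hcancel : (δ + μ) * ((t:ℝ) - l + 1) ≤ δ * T :=
    le_of_mul_le_mul_right (by linarith [hstep]) hPQpos
  have htm : (m:ℝ) + 1 ≤ (t:ℝ) - l + 1 := by
    have : ((l + m : ℕ) : ℝ) ≤ (t:ℝ) := by exact_mod_cast ht
    push_cast at this
    linarith
  have hμm : (2:ℝ) < μ * m := by
    have := (div_lt_iff₀ hμ).mp hm
    linarith
  have hμt : (2:ℝ) < μ * ((t:ℝ) - l + 1) := by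
    have h1 : μ * ((m:ℝ) + 1) ≤ μ * ((t:ℝ) - l + 1) :=
      mul_le_mul_of_nonneg_left htm (le_of_lt hμ)
    have h2 : μ * ((m:ℝ) + 1) = μ * (m:ℝ) + μ := by ring
    linarith
  have hTt : δ * T = δ * ((t:ℝ) - l + 1) + δ := by rw [hT_def]; ring
  have hexp : (δ + μ) * ((t:ℝ) - l + 1) = δ * ((t:ℝ) - l + 1) + μ * ((t:ℝ) - l + 1) := by ring
  linarith [hcancel, hμt, hδ1, hTt, hexp]
end

section
/- (Existence of arcs.) Let 1 ≤ d ≤ k−1. For all reals δ, ε > 0 with δ + δ^(1−1/(k−d)) > 1 + ε there exists t_0 such that for all t ≥ t_0 the following holds: if R is a k-graph on t vertices with at least one edge and (C_S) is a d-vicinity in R such that every C_S (for S an edge of ∂_d(R)) has at least δ·(t choose k−d) edges, then the vicinity admits an arc. -/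
set_option maxHeartbeats 1000000


open Finset

variable {A : Type*} [DecidableEq A]

private lemma arc_claim1 (r s t : ℕ) (h : s ≤ t) : s.choose r * t ^ r ≤ t.choose r * s ^ r := by
  induction r with
  | zero => simp
  | succ r ih =>
    have key : (s - r) * t ≤ (t - r) * s := by
      have h1 : r * s ≤ r * t := Nat.mul_le_mul_left r h
      have h2 : s * t = t * s := mul_comm s t
      rw [Nat.sub_mul, Nat.sub_mul]
      omega
    have h1 : s.choose (r+1) * t ^ (r+1) * (r+1) ≤ t.choose (r+1) * s ^ (r+1) * (r+1) := by
      calc s.choose (r+1) * t ^ (r+1) * (r+1)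
          = (s.choose (r+1) * (r+1)) * t ^ (r+1) := by ring
        _ = (s.choose r * (s - r)) * t ^ (r+1) := by rw [Nat.choose_succ_right_eq]
        _ = (s.choose r * t ^ r) * ((s - r) * t) := by ring
        _ ≤ (t.choose r * s ^ r) * ((t - r) * s) := Nat.mul_le_mul ih key
        _ = (t.choose r * (t - r)) * s ^ (r+1) := by ring
        _ = (t.choose (r+1) * (r+1)) * s ^ (r+1) := by rw [Nat.choose_succ_right_eq]
        _ = t.choose (r+1) * s ^ (r+1) * (r+1) := by ring
    exact Nat.le_of_mul_le_mul_right h1 (Nat.succ_pos r)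

private lemma arc_claim2 (r s t : ℕ) : t.choose r * (s - r) ^ r ≤ s.choose r * t ^ r := by
  induction r with
  | zero => simp
  | succ r ih =>
    have key : (t - r) * (s - (r+1)) ≤ t * (s - r) := by
      exact Nat.mul_le_mul (Nat.sub_le t r) (Nat.sub_le_sub_left (Nat.le_succ r) s)
    have h1 : t.choose (r+1) * (s - (r+1)) ^ (r+1) * (r+1) ≤ s.choose (r+1) * t ^ (r+1) * (r+1) := by
      calc t.choose (r+1) * (s - (r+1)) ^ (r+1) * (r+1)
          = (t.choose (r+1) * (r+1)) * ((s - (r+1)) ^ r * (s - (r+1))) := by ring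
        _ = (t.choose r * (t - r)) * ((s - (r+1)) ^ r * (s - (r+1))) := by
            rw [Nat.choose_succ_right_eq]
        _ ≤ (t.choose r * (t - r)) * ((s - r) ^ r * (s - (r+1))) := by
            refine Nat.mul_le_mul_left _ (Nat.mul_le_mul_right _ (Nat.pow_le_pow_left ?_ r))
            exact Nat.sub_le_sub_left (Nat.le_succ r) s
        _ = (t.choose r * (s - r) ^ r) * ((t - r) * (s - (r+1))) := by ring
        _ ≤ (s.choose r * t ^ r) * (t * (s - r)) := Nat.mul_le_mul ih key
        _ = (s.choose r * (s - r)) * t ^ (r+1) := by ring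
        _ = (s.choose (r+1) * (r+1)) * t ^ (r+1) := by rw [Nat.choose_succ_right_eq]
        _ = s.choose (r+1) * t ^ (r+1) * (r+1) := by ring
    exact Nat.le_of_mul_le_mul_right h1 (Nat.succ_pos r)

private lemma arc_image_erase {α β : Type*} [DecidableEq α] [DecidableEq β] (f : α → β)
    (g : β → α) (Z : Finset α) (hg : ∀ a ∈ Z, g (f a) = a) {x : α} (hx : x ∈ Z) :
    (Z.image f).erase (f x) = (Z.erase x).image f := by
  ext b
  simp only [Finset.mem_erase, Finset.mem_image]
  constructor
  · rintro ⟨hb, y, hy, rfl⟩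
    exact ⟨y, ⟨fun h => hb (by rw [h]), hy⟩, rfl⟩
  · rintro ⟨y, ⟨hyx, hy⟩, rfl⟩
    refine ⟨fun h => hyx ?_, y, hy, rfl⟩
    have := hg y hy
    rw [h, hg x hx] at this
    exact this.symm

private lemma arc_shadow_inst {α : Type*} (i1 i2 : DecidableEq α) (F : Finset (Finset α)) :
    @Finset.shadow α i1 F = @Finset.shadow α i2 F := by
  have : i1 = i2 := by funext a b; exact Subsingleton.elim _ _
  rw [this]

private lemma arc_shadow_mem {B : Type*} [DecidableEq B] {E : Finset (Finset B)} {d : ℕ}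
    {S : Finset B} : S ∈ shadow d E ↔ ∃ e ∈ E, S ⊆ e ∧ S.card = d := by
  simp only [_root_.shadow, Finset.mem_biUnion, Finset.mem_powersetCard]

private lemma arc_link_facts {B : Type*} [DecidableEq B] {V : Finset B} {E : Finset (Finset B)}
    {k d : ℕ} (hE : ∀ e ∈ E, e ⊆ V ∧ e.card = k) {S Z : Finset B} (hS : S.card = d)
    (hZ : Z ∈ link S E) : Z ⊆ V ∧ Z.card = k - d ∧ Disjoint Z S ∧ S ∪ Z ∈ E := by
  simp only [link, Finset.mem_image, Finset.mem_filter] at hZ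
  obtain ⟨e, ⟨he, hSe⟩, rfl⟩ := hZ
  obtain ⟨heV, hek⟩ := hE e he
  refine ⟨sdiff_subset.trans heV, ?_, sdiff_disjoint, ?_⟩
  · rw [card_sdiff_of_subset hSe, hek, hS]
  · rw [union_sdiff_of_subset hSe]; exact he

/-- existence of arcs. -/
theorem arc_existence (k d : ℕ) (hd : 1 ≤ d) (hdk : d ≤ k - 1) (δ ε : ℝ)
    (hδ : 0 < δ) (hε : 0 < ε)
    (hcond : 1 + ε < δ + δ ^ ((1 : ℝ) - 1 / ((k : ℝ) - (d : ℝ)))) :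
    ∃ t₀ : ℕ, ∀ t : ℕ, t₀ ≤ t →
      ∀ (B : Type) [DecidableEq B], ∀ (V : Finset B) (E : Finset (Finset B)),
        V.card = t → (∀ e ∈ E, e ⊆ V ∧ e.card = k) → E.Nonempty →
        ∀ C : Finset B → Finset (Finset B),
          (∀ S ∈ shadow d E, C S ⊆ link S E) →
          (∀ S ∈ shadow d E, δ * ((t.choose (k - d) : ℕ) : ℝ) ≤ ((C S).card : ℝ)) →
          HasArc k d E C := by
  
  have hdklt : d < k := by omega
  set m := k - d with hmdef
  have hm1 : 1 ≤ m := by omega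
  have hkdm : k = d + m := by omega
  rcases lt_or_ge 1 δ with hδ1 | hδ1
  · -- degenerate case δ > 1 : hypotheses are contradictory for large t
    refine ⟨k + 2, fun t ht B _ V E hV hE hEne C hC1 hC2 => ?_⟩
    obtain ⟨e₀, he₀⟩ := hEne
    obtain ⟨he₀V, he₀k⟩ := hE e₀ he₀
    obtain ⟨S, hSsub, hScard⟩ := Finset.exists_subset_card_eq
      (show d ≤ e₀.card by rw [he₀k]; omega)
    have hS : S ∈ shadow d E := arc_shadow_mem.2 ⟨e₀, he₀, hSsub, hScard⟩
    have h1 := hC2 S hS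
    have hsub : C S ⊆ V.powersetCard m := fun Z hZ => by
      obtain ⟨hZV, hZc, -, -⟩ := arc_link_facts hE hScard (hC1 S hS hZ)
      exact Finset.mem_powersetCard.2 ⟨hZV, hZc⟩
    have h2 : (C S).card ≤ t.choose m := by
      have := Finset.card_le_card hsub
      rwa [Finset.card_powersetCard, hV] at this
    have hM : 0 < t.choose m := Nat.choose_pos (by omega)
    exfalso
    have h3 : ((C S).card : ℝ) ≤ (t.choose m : ℝ) := by exact_mod_cast h2
    have h4 : (0:ℝ) < (t.choose m : ℝ) := by exact_mod_cast hM
    have h5 := mul_lt_mul_of_pos_right hδ1 h4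
    linarith
  -- main case : δ ≤ 1
  have hmne : ((m:ℕ):ℝ) ≠ 0 := Nat.cast_ne_zero.2 (by omega)
  have hmRpos : (0:ℝ) < (m:ℝ) := by exact_mod_cast (show 0 < m by omega)
  set θ : ℝ := δ ^ ((m:ℝ)⁻¹) with hθdef
  have hθpos : 0 < θ := Real.rpow_pos_of_pos hδ _
  have hθle1 : θ ≤ 1 := Real.rpow_le_one hδ.le hδ1 (by positivity)
  have hθpow : θ ^ (m:ℕ) = δ := by
    rw [hθdef, ← Real.rpow_natCast (δ ^ ((m:ℝ)⁻¹)) m, ← Real.rpow_mul hδ.le,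
      inv_mul_cancel₀ hmne, Real.rpow_one]
  have hm1R : ((m - 1:ℕ):ℝ) = (m:ℝ) - 1 := by
    have := Nat.cast_sub (R := ℝ) hm1
    exact_mod_cast this
  have hcast : ((m:ℕ):ℝ) = (k:ℝ) - (d:ℝ) := by
    rw [hmdef]; exact_mod_cast Nat.cast_sub (show d ≤ k by omega)
  have hθm1 : θ ^ (m - 1:ℕ) = δ ^ ((1:ℝ) - 1/((k:ℝ)-(d:ℝ))) := by
    rw [← hcast, hθdef, ← Real.rpow_natCast (δ ^ ((m:ℝ)⁻¹)) (m-1), ← Real.rpow_mul hδ.le, hm1R]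
    congr 1
    field_simp
  rw [← hθm1] at hcond
  have hθm1le : θ ^ (m-1:ℕ) ≤ 1 := pow_le_one₀ hθpos.le hθle1
  have hε1 : ε < 1 := by linarith
  set ρ₁ : ℝ := 1 - ε / (2*m) with hρ₁def
  set ρ₂ : ℝ := 1 - ε / (4*m) with hρ₂def
  have hmge1 : (1:ℝ) ≤ (m:ℝ) := by exact_mod_cast hm1
  have hd21 : ε / (2*m) ≤ ε / 2 := div_le_div_of_nonneg_left hε.le two_pos (by linarith)
  have hd2pos : 0 < ε / (2*(m:ℝ)) := by positivity
  have hd4pos : 0 < ε / (4*(m:ℝ)) := by positivity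
  have hd42 : ε / (4*(m:ℝ)) < ε / (2*(m:ℝ)) := by
    apply div_lt_div_of_pos_left hε (by positivity) (by linarith)
  have hρ₁pos : 0 < ρ₁ := by rw [hρ₁def]; linarith
  have hρ₂pos : 0 < ρ₂ := by rw [hρ₂def]; linarith
  have hρ₁₂ : ρ₁ < ρ₂ := by rw [hρ₁def, hρ₂def]; linarith
  have hρ₂1 : ρ₂ < 1 := by rw [hρ₂def]; linarith
  set θ₁ : ℝ := θ * ρ₁ with hθ₁def
  set θ₂ : ℝ := θ * ρ₂ with hθ₂def
  have hθ₁pos : 0 < θ₁ := mul_pos hθpos hρ₁pos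
  have hθ₂pos : 0 < θ₂ := mul_pos hθpos hρ₂pos
  have hθ₁₂ : θ₁ < θ₂ := by rw [hθ₁def, hθ₂def]; exact mul_lt_mul_of_pos_left hρ₁₂ hθpos
  have hθ₂1 : θ₂ < 1 := lt_of_le_of_lt (mul_le_of_le_one_left hρ₂pos.le hθle1) hρ₂1
  have key2 : θ₂ ^ (m:ℕ) < δ := by
    have h := pow_lt_one₀ hρ₂pos.le hρ₂1 (show m ≠ 0 by omega)
    calc θ₂ ^ (m:ℕ) = δ * ρ₂ ^ (m:ℕ) := by rw [hθ₂def, mul_pow, hθpow]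
      _ < δ := by have := mul_lt_mul_of_pos_left h hδ; linarith
  have key1 : 1 + ε/2 < δ + θ₁ ^ (m-1:ℕ) := by
    have hber : 1 + ((m-1:ℕ):ℝ) * (-(ε/(2*m))) ≤ (1 + (-(ε/(2*m)))) ^ (m-1:ℕ) :=
      one_add_mul_le_pow (by linarith) (m-1)
    have heq : (1 + (-(ε/(2*(m:ℝ))))) = ρ₁ := by rw [hρ₁def]; ring
    rw [heq] at hber
    have hsmall : ((m-1:ℕ):ℝ) * (ε/(2*m)) ≤ ε/2 := by
      rw [hm1R]
      have heq2 : ((m:ℝ) - 1) * (ε/(2*m)) = ε/2 * (((m:ℝ)-1)/m) := by field_simp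
      rw [heq2]
      have hle1 : ((m:ℝ)-1)/m ≤ 1 := by rw [div_le_one hmRpos]; linarith
      exact mul_le_of_le_one_right (by positivity) hle1
    have hb1 : 1 - ε/2 ≤ ρ₁ ^ (m-1:ℕ) := by linarith
    have hexp : θ₁ ^ (m-1:ℕ) = θ ^ (m-1:ℕ) * ρ₁ ^ (m-1:ℕ) := by rw [hθ₁def, mul_pow]
    have hθm1pos : 0 < θ ^ (m-1:ℕ) := pow_pos hθpos _
    have hkey := mul_le_mul_of_nonneg_left hb1 hθm1pos.le
    have hprod : θ^(m-1:ℕ) * ε ≤ 1 * ε := mul_le_mul_of_nonneg_right hθm1le hε.le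
    linarith [hkey, hcond, hprod, hexp.le, hexp.ge]
  have hc3 : 0 < δ - θ₂ ^ (m:ℕ) := by linarith
  have hc21 : 0 < θ₂ - θ₁ := by linarith
  set T₀ : ℝ := max (((m:ℝ)+1)/(θ₂-θ₁)) (max ((m:ℝ)/(δ - θ₂ ^ (m:ℕ)) + (m:ℝ)) (2*((m:ℝ)+1)/ε))
    with hT₀def
  refine ⟨max (k+2) (⌈T₀⌉₊ + 1), ?_⟩
  intro t ht B _inst V E hV hE hEne C hC1 hC2
  have htk : k + 2 ≤ t := le_trans (le_max_left _ _) ht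
  have htT : T₀ ≤ (t:ℝ) := by
    have h1 : ⌈T₀⌉₊ + 1 ≤ t := le_trans (le_max_right _ _) ht
    calc T₀ ≤ (⌈T₀⌉₊:ℝ) := Nat.le_ceil _
      _ ≤ (t:ℝ) := by exact_mod_cast Nat.le_of_succ_le h1
  have htpos : (0:ℝ) < (t:ℝ) := by exact_mod_cast (show 0 < t by omega)
  have htm : m + 1 ≤ t := by omega
  have htmR : (m:ℝ) + 1 ≤ (t:ℝ) := by exact_mod_cast htm
  have cond2 : (m:ℝ) + 1 ≤ (θ₂ - θ₁) * t := by
    have h := le_trans (le_max_left _ _) htT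
    rw [div_le_iff₀ hc21] at h; linarith
  have cond3 : (m:ℝ) ≤ (δ - θ₂ ^ (m:ℕ)) * ((t:ℝ) - m + 1) := by
    have h := le_trans (le_trans (le_max_left _ _) (le_max_right _ _)) htT
    have h2 : (m:ℝ)/(δ - θ₂ ^ (m:ℕ)) ≤ (t:ℝ) - m := by linarith
    rw [div_le_iff₀ hc3] at h2
    have h3 := mul_le_mul_of_nonneg_left
      (show (t:ℝ) - m ≤ (t:ℝ) - m + 1 by linarith) hc3.le
    linarith
  have cond4 : (m:ℝ) + 1 ≤ ε/2 * t := by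
    have h := le_trans (le_trans (le_max_right _ _) (le_max_right _ _)) htT
    rw [div_le_iff₀ hε] at h; linarith
  -- basic processing
  obtain ⟨e₀, he₀⟩ := hEne
  obtain ⟨he₀V, he₀k⟩ := hE e₀ he₀
  obtain ⟨S, hSsub, hScard⟩ := Finset.exists_subset_card_eq
    (show d ≤ e₀.card by rw [he₀k]; omega)
  have hS : S ∈ _root_.shadow d E := arc_shadow_mem.2 ⟨e₀, he₀, hSsub, hScard⟩
  have hfacts : ∀ S' ∈ _root_.shadow d E, ∀ Z ∈ C S',
      Z ⊆ V ∧ Z.card = m ∧ Disjoint Z S' ∧ S' ∪ Z ∈ E := by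
    intro S' hS' Z hZ
    obtain ⟨e, he, hsub, hcard⟩ := arc_shadow_mem.1 hS'
    exact arc_link_facts hE hcard (hC1 S' hS' hZ)
  have hMpos : 0 < t.choose m := Nat.choose_pos (by omega)
  have hNpos : 0 < t.choose (m-1) := Nat.choose_pos (by omega)
  have hMR : (0:ℝ) < (t.choose m : ℝ) := by exact_mod_cast hMpos
  have hNR : (0:ℝ) < (t.choose (m-1) : ℝ) := by exact_mod_cast hNpos
  have hid : t.choose m * m = t.choose (m-1) * (t - (m-1)) := by
    conv_lhs => rw [show m = (m-1)+1 by omega]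
    exact Nat.choose_succ_right_eq t (m-1)
  have hidR : (t.choose m : ℝ) * m = (t.choose (m-1) : ℝ) * ((t:ℝ) - (m:ℝ) + 1) := by
    calc (t.choose m : ℝ) * m = ((t.choose m * m : ℕ) : ℝ) := by push_cast; ring
      _ = ((t.choose (m-1) * (t - (m-1)) : ℕ) : ℝ) := by rw [hid]
      _ = (t.choose (m-1):ℝ) * ((t:ℝ) - m + 1) := by
          rw [Nat.cast_mul, Nat.cast_sub (show m-1 ≤ t by omega), hm1R]; ring
  have hCS := hC2 S hS
  have hCSpos : 0 < (C S).card := by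
    by_contra h0
    push_neg at h0
    have h00 : (C S).card = 0 := by omega
    rw [h00] at hCS
    push_cast at hCS
    have h5 := mul_pos hδ hMR
    linarith
  have hdouble : ∑ v ∈ V, ((C S).filter (fun Z => v ∈ Z)).card = m * (C S).card := by
    have h1 : ∀ v : B, ((C S).filter (fun Z => v ∈ Z)).card
        = ∑ Z ∈ C S, if v ∈ Z then 1 else 0 := fun v => Finset.card_filter _ _
    calc ∑ v ∈ V, ((C S).filter (fun Z => v ∈ Z)).card
        = ∑ v ∈ V, ∑ Z ∈ C S, if v ∈ Z then 1 else 0 := Finset.sum_congr rfl fun v _ => h1 v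
      _ = ∑ Z ∈ C S, ∑ v ∈ V, if v ∈ Z then 1 else 0 := Finset.sum_comm
      _ = ∑ Z ∈ C S, Z.card := by
          refine Finset.sum_congr rfl fun Z hZ => ?_
          rw [← Finset.card_filter, Finset.filter_mem_eq_inter,
            Finset.inter_eq_right.2 (hfacts S hS Z hZ).1]
      _ = ∑ Z ∈ C S, m := Finset.sum_congr rfl fun Z hZ => (hfacts S hS Z hZ).2.1
      _ = m * (C S).card := by rw [Finset.sum_const, smul_eq_mul, mul_comm]
  have hVne : V.Nonempty := by rw [← Finset.card_pos, hV]; omega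
  obtain ⟨v, hvV, hvdeg⟩ : ∃ v ∈ V,
      m * (C S).card ≤ t * ((C S).filter (fun Z => v ∈ Z)).card := by
    apply Finset.exists_le_of_sum_le hVne
    rw [Finset.sum_const, hV, ← Finset.mul_sum, hdouble, smul_eq_mul]
  have hdegpos : 0 < ((C S).filter (fun Z => v ∈ Z)).card := by
    rcases Nat.eq_zero_or_pos ((C S).filter (fun Z => v ∈ Z)).card with h0 | h
    · rw [h0, Nat.mul_zero] at hvdeg
      have := Nat.mul_pos (show 0 < m by omega) hCSpos
      omega
    · exact h
  obtain ⟨Z₀, hZ₀⟩ := Finset.card_pos.1 hdegpos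
  rw [Finset.mem_filter] at hZ₀
  obtain ⟨hZ₀C, hvZ₀⟩ := hZ₀
  obtain ⟨v₁, hv₁S⟩ := Finset.card_pos.1 (show 0 < S.card by rw [hScard]; omega)
  have hZ₀f := hfacts S hS Z₀ hZ₀C
  have hvS : v ∉ S := fun h => Finset.disjoint_left.1 hZ₀f.2.2.1 hvZ₀ h
  set S' : Finset B := insert v (S.erase v₁) with hS'def
  have hvnotin : v ∉ S.erase v₁ := fun h => hvS (Finset.mem_of_mem_erase h)
  have hS'card : S'.card = d := by
    rw [hS'def, Finset.card_insert_of_notMem hvnotin, Finset.card_erase_of_mem hv₁S, hScard]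
    omega
  have hS'mem : S' ∈ _root_.shadow d E := by
    refine arc_shadow_mem.2 ⟨S ∪ Z₀, hZ₀f.2.2.2, ?_, hS'card⟩
    rw [hS'def]
    intro x hx
    rcases Finset.mem_insert.1 hx with rfl | hx
    · exact Finset.mem_union_right _ hvZ₀
    · exact Finset.mem_union_left _ (Finset.mem_of_mem_erase hx)
  have hCS' := hC2 S' hS'mem
  set C'' : Finset (Finset B) := (C S').filter (fun Z => v₁ ∉ Z) with hC''def
  have hC''sub : C'' ⊆ C S' := Finset.filter_subset _ _
  have hsplit : (C S').card ≤ C''.card + t.choose (m-1) := by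
    have h1 : ((C S').filter (fun Z => v₁ ∈ Z)).card ≤ t.choose (m-1) := by
      have hh : ((C S').filter (fun Z => v₁ ∈ Z)).card ≤ (V.powersetCard (m-1)).card := by
        apply Finset.card_le_card_of_injOn (fun Z => Z.erase v₁)
        · intro Z hZ
          rw [Finset.mem_coe, Finset.mem_filter] at hZ
          obtain ⟨hZV, hZc, -, -⟩ := hfacts S' hS'mem Z hZ.1
          exact Finset.mem_powersetCard.2 ⟨(Finset.erase_subset _ _).trans hZV,
            by rw [Finset.card_erase_of_mem hZ.2, hZc]⟩
        · intro Z hZ Z' hZ' heq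
          rw [Finset.mem_coe, Finset.mem_filter] at hZ hZ'
          have heq' : Z.erase v₁ = Z'.erase v₁ := by simpa using heq
          rw [← Finset.insert_erase hZ.2, ← Finset.insert_erase hZ'.2, heq']
      rwa [Finset.card_powersetCard, hV] at hh
    have h2 : C S' ⊆ C'' ∪ (C S').filter (fun Z => v₁ ∈ Z) := by
      intro Z hZ
      by_cases hv₁Z : v₁ ∈ Z
      · exact Finset.mem_union_right _ (Finset.mem_filter.2 ⟨hZ, hv₁Z⟩)
      · exact Finset.mem_union_left _ (Finset.mem_filter.2 ⟨hZ, hv₁Z⟩)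
    have h3 := (Finset.card_le_card h2).trans (Finset.card_union_le _ _)
    omega
  set s : ℕ := ⌈θ₁ * t⌉₊ + m with hsdef
  have hsceil : θ₁ * t ≤ (⌈θ₁ * t⌉₊ : ℝ) := Nat.le_ceil _
  have hsle : (s:ℝ) ≤ θ₂ * t := by
    have h1 : (⌈θ₁ * t⌉₊ : ℝ) < θ₁ * t + 1 := Nat.ceil_lt_add_one (by positivity)
    rw [hsdef]
    push_cast
    linarith [cond2, h1]
  have hst : s ≤ t := by
    have h1 : (s:ℝ) ≤ (t:ℝ) := le_trans hsle
      (by have := mul_le_mul_of_nonneg_right hθ₂1.le htpos.le; linarith)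
    exact_mod_cast h1
  have hC''cardR : δ * (t.choose m : ℝ) - (t.choose (m-1):ℝ) ≤ (C''.card : ℝ) := by
    have h1 : ((C S').card : ℝ) ≤ (C''.card:ℝ) + (t.choose (m-1):ℝ) := by exact_mod_cast hsplit
    linarith
  have hchoose_s_m : (s.choose m : ℝ) ≤ θ₂ ^ (m:ℕ) * (t.choose m : ℝ) := by
    have h1R : (s.choose m : ℝ) * (t:ℝ)^(m:ℕ) ≤ (t.choose m:ℝ) * (s:ℝ)^(m:ℕ) := by
      exact_mod_cast arc_claim1 m s t hst
    have h2 : (s:ℝ)^(m:ℕ) ≤ (θ₂*t)^(m:ℕ) := pow_le_pow_left₀ (by positivity) hsle m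
    have h3 : (t.choose m:ℝ) * (s:ℝ)^(m:ℕ) ≤ (t.choose m:ℝ) * ((θ₂*(t:ℝ))^(m:ℕ)) :=
      mul_le_mul_of_nonneg_left h2 (by positivity)
    rw [mul_pow] at h3
    have htmpow : (0:ℝ) < (t:ℝ)^(m:ℕ) := by positivity
    have h4 : (s.choose m:ℝ) * (t:ℝ)^(m:ℕ) ≤ (θ₂^(m:ℕ) * (t.choose m:ℝ)) * (t:ℝ)^(m:ℕ) := by
      linarith [h1R, h3]
    exact le_of_mul_le_mul_right h4 htmpow
  have hNle : (t.choose (m-1):ℝ) ≤ (δ - θ₂^(m:ℕ)) * (t.choose m:ℝ) := by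
    have htm1 : (0:ℝ) < (t:ℝ) - m + 1 := by linarith
    have h2 : (t.choose (m-1):ℝ) * ((t:ℝ)-m+1)
        ≤ ((δ - θ₂^(m:ℕ)) * (t.choose m:ℝ)) * ((t:ℝ)-m+1) := by
      rw [← hidR]
      have h3 := mul_le_mul_of_nonneg_left cond3 hMR.le
      linarith
    exact le_of_mul_le_mul_right h2 htm1
  have hKKsize : s.choose m ≤ C''.card := by
    have h1 : (s.choose m : ℝ) ≤ (C''.card:ℝ) := by linarith
    exact_mod_cast h1
  have hC''V : ∀ Z ∈ C'', Z ⊆ V ∧ Z.card = m := fun Z hZ =>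
    ⟨(hfacts S' hS'mem Z (hC''sub hZ)).1, (hfacts S' hS'mem Z (hC''sub hZ)).2.1⟩
  obtain ⟨f, g, hgf⟩ : ∃ (f : B → Fin t) (g : Fin t → B), ∀ b ∈ V, g (f b) = b := by
    have e : {x // x ∈ V} ≃ Fin t := (V.equivFin).trans (finCongr hV)
    exact ⟨fun b => if h : b ∈ V then e ⟨b, h⟩ else e ⟨v, hvV⟩,
      fun i => (e.symm i : B), fun b hb => by simp [dif_pos hb]⟩
  have hrecover : ∀ W : Finset B, W ⊆ V → (W.image f).image g = W := by
    intro W hWV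
    rw [Finset.image_image]
    exact (Finset.image_congr fun x hx => hgf x (hWV hx)).trans Finset.image_id
  have hfinj : ∀ W : Finset B, W ⊆ V → Set.InjOn f W := by
    intro W hWV x hx y hy hxy
    rw [← hgf x (hWV hx), ← hgf y (hWV hy), hxy]
  set F' : Finset (Finset (Fin t)) := C''.image (fun Z => Z.image f) with hF'def
  have hF'card : F'.card = C''.card := by
    apply Finset.card_image_of_injOn
    intro Z hZ Z' hZ' heq
    rw [Finset.mem_coe] at hZ hZ'
    have heq' : Z.image f = Z'.image f := by simpa using heq
    rw [← hrecover Z (hC''V Z hZ).1, ← hrecover Z' (hC''V Z' hZ').1, heq']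
  have hF'sized : (F' : Set (Finset (Fin t))).Sized m := by
    intro W hW
    rw [Finset.mem_coe, hF'def, Finset.mem_image] at hW
    obtain ⟨Z, hZ, rfl⟩ := hW
    rw [Finset.card_image_of_injOn (hfinj Z (hC''V Z hZ).1)]
    exact (hC''V Z hZ).2
  have hKK : s.choose (m-1) ≤ (Finset.shadow F').card := by
    have h := Finset.kruskal_katona_lovasz_form (i := 1) (show 1 ≤ m by omega)
      (show m ≤ s by omega) hst hF'sized (by rw [hF'card]; exact hKKsize)
    rw [Function.iterate_one] at h
    convert h using 2
  have hshadow_sub : Finset.shadow F' ⊆ (Finset.shadow C'').image (fun Z => Z.image f) := by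
    intro W hW
    rw [Finset.mem_shadow_iff] at hW
    obtain ⟨U, hU, a, haU, rfl⟩ := hW
    rw [hF'def, Finset.mem_image] at hU
    obtain ⟨Z, hZ, rfl⟩ := hU
    obtain ⟨x, hxZ, rfl⟩ := Finset.mem_image.1 haU
    rw [arc_image_erase f g Z (fun y hy => hgf y ((hC''V Z hZ).1 hy)) hxZ]
    exact Finset.mem_image_of_mem _ (Finset.mem_shadow_iff.2 ⟨Z, hZ, x, hxZ, rfl⟩)
  have hAcard : s.choose (m-1) ≤ (Finset.shadow C'').card :=
    hKK.trans ((Finset.card_le_card hshadow_sub).trans Finset.card_image_le)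
  have hsm1 : s - (m-1) = ⌈θ₁ * t⌉₊ + 1 := by omega
  have hAR : θ₁ ^ (m-1:ℕ) * (t.choose (m-1):ℝ) ≤ ((Finset.shadow C'').card : ℝ) := by
    have h1R : (t.choose (m-1):ℝ) * ((s - (m-1):ℕ):ℝ)^(m-1:ℕ)
        ≤ (s.choose (m-1):ℝ) * (t:ℝ)^(m-1:ℕ) := by exact_mod_cast arc_claim2 (m-1) s t
    have h2 : θ₁ * t ≤ ((s - (m-1):ℕ):ℝ) := by
      rw [hsm1]
      push_cast
      linarith
    have h3 : (θ₁*(t:ℝ))^(m-1:ℕ) ≤ (((s-(m-1):ℕ)):ℝ)^(m-1:ℕ) :=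
      pow_le_pow_left₀ (by positivity) h2 _
    have h4 : (s.choose (m-1):ℝ) ≤ ((Finset.shadow C'').card:ℝ) := by exact_mod_cast hAcard
    have htm1pos : (0:ℝ) < (t:ℝ)^(m-1:ℕ) := by positivity
    have h5 : (t.choose (m-1):ℝ) * (θ₁*(t:ℝ))^(m-1:ℕ)
        ≤ ((Finset.shadow C'').card:ℝ) * (t:ℝ)^(m-1:ℕ) := by
      calc (t.choose (m-1):ℝ) * (θ₁*(t:ℝ))^(m-1:ℕ)
          ≤ (t.choose (m-1):ℝ) * (((s-(m-1):ℕ)):ℝ)^(m-1:ℕ) :=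
            mul_le_mul_of_nonneg_left h3 (by positivity)
        _ ≤ (s.choose (m-1):ℝ) * (t:ℝ)^(m-1:ℕ) := h1R
        _ ≤ ((Finset.shadow C'').card:ℝ) * (t:ℝ)^(m-1:ℕ) :=
            mul_le_mul_of_nonneg_right h4 (by positivity)
    rw [mul_pow] at h5
    refine le_of_mul_le_mul_right ?_ htm1pos
    linarith [h5]
  set B' : Finset (Finset B) := ((C S).filter (fun Z => v ∈ Z)).image (fun Z => Z.erase v)
    with hB'def
  have hB'card : B'.card = ((C S).filter (fun Z => v ∈ Z)).card := by
    apply Finset.card_image_of_injOn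
    intro Z hZ Z' hZ' heq
    rw [Finset.mem_coe, Finset.mem_filter] at hZ hZ'
    have heq' : Z.erase v = Z'.erase v := by simpa using heq
    rw [← Finset.insert_erase hZ.2, ← Finset.insert_erase hZ'.2, heq']
  have hB'R : δ * ((t:ℝ) - m + 1) * (t.choose (m-1):ℝ) ≤ (t:ℝ) * (B'.card:ℝ) := by
    have h1 : (m:ℝ) * ((C S).card:ℝ) ≤ (t:ℝ) * (B'.card:ℝ) := by
      rw [hB'card]; exact_mod_cast hvdeg
    have h2 : δ * ((t.choose m:ℝ) * m) ≤ (m:ℝ) * ((C S).card:ℝ) := by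
      have h3 := mul_le_mul_of_nonneg_left hCS hmRpos.le
      linarith
    rw [hidR] at h2
    linarith
  have hABcard : t.choose (m-1) < (Finset.shadow C'').card + B'.card := by
    have e2 : (t:ℝ) * (θ₁^(m-1:ℕ) * (t.choose (m-1):ℝ))
        ≤ (t:ℝ) * ((Finset.shadow C'').card:ℝ) := mul_le_mul_of_nonneg_left hAR htpos.le
    have hld : δ * ((m:ℝ) - 1) * (t.choose (m-1):ℝ) ≤ (ε/2*(t:ℝ)) * (t.choose (m-1):ℝ) := by
      have hh : δ * ((m:ℝ) - 1) ≤ (m:ℝ) + 1 := by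
        have h3 := mul_le_mul_of_nonneg_right hδ1 (show (0:ℝ) ≤ (m:ℝ) - 1 by linarith)
        linarith
      exact mul_le_mul_of_nonneg_right (le_trans hh cond4) hNR.le
    have e4 := mul_lt_mul_of_pos_left key1 (mul_pos htpos hNR)
    have h1 : (t:ℝ) * (t.choose (m-1):ℝ)
        < (t:ℝ) * (((Finset.shadow C'').card:ℝ) + (B'.card:ℝ)) := by
      linarith [hB'R, e2, hld, e4]
    have h2 := lt_of_mul_lt_mul_left h1 htpos.le
    exact_mod_cast h2
  have hsubU : Finset.shadow C'' ∪ B' ⊆ V.powersetCard (m-1) := by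
    intro W hW
    rcases Finset.mem_union.1 hW with hW | hW
    · rw [Finset.mem_shadow_iff] at hW
      obtain ⟨Z, hZ, a, haZ, rfl⟩ := hW
      exact Finset.mem_powersetCard.2 ⟨(Finset.erase_subset _ _).trans (hC''V Z hZ).1,
        by rw [Finset.card_erase_of_mem haZ, (hC''V Z hZ).2]⟩
    · rw [hB'def, Finset.mem_image] at hW
      obtain ⟨Z, hZ, rfl⟩ := hW
      rw [Finset.mem_filter] at hZ
      obtain ⟨hZV, hZc, -, -⟩ := hfacts S hS Z hZ.1
      exact Finset.mem_powersetCard.2 ⟨(Finset.erase_subset _ _).trans hZV,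
        by rw [Finset.card_erase_of_mem hZ.2, hZc]⟩
  have hUcard : (Finset.shadow C'' ∪ B').card ≤ t.choose (m-1) := by
    have hh := Finset.card_le_card hsubU
    rwa [Finset.card_powersetCard, hV] at hh
  have hinter : (Finset.shadow C'' ∩ B').Nonempty := by
    rw [← Finset.card_pos]
    have hh := Finset.card_inter_add_card_union (Finset.shadow C'') B'
    omega
  obtain ⟨Y, hY⟩ := hinter
  obtain ⟨hYA, hYB⟩ := Finset.mem_inter.1 hY
  rw [hB'def, Finset.mem_image] at hYB
  obtain ⟨Z, hZmem, hYeq⟩ := hYB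
  rw [Finset.mem_filter] at hZmem
  obtain ⟨hZC, hvZ⟩ := hZmem
  obtain ⟨w, hwY, hwC⟩ := Finset.mem_shadow_iff_insert_mem.1 hYA
  have hZf := hfacts S hS Z hZC
  have hWC' : insert w Y ∈ C S' := (Finset.mem_filter.1 hwC).1
  have hv₁W : v₁ ∉ insert w Y := (Finset.mem_filter.1 hwC).2
  have hWf := hfacts S' hS'mem (insert w Y) hWC'
  have hYZ : Y ⊆ Z := by rw [← hYeq]; exact Finset.erase_subset _ _
  have hvY : v ∉ Y := by rw [← hYeq]; exact Finset.notMem_erase _ _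
  have hYS : ∀ y ∈ Y, y ∉ S := fun y hy hyS => Finset.disjoint_left.1 hZf.2.2.1 (hYZ hy) hyS
  have hwS' : w ∉ S' := Finset.disjoint_left.1 hWf.2.2.1 (Finset.mem_insert_self w Y)
  have hwv : w ≠ v := fun h => hwS' (by rw [hS'def, h]; exact Finset.mem_insert_self _ _)
  have hwSe : w ∉ S.erase v₁ := fun h => hwS' (by rw [hS'def]; exact Finset.mem_insert_of_mem h)
  have hwv₁ : w ≠ v₁ := fun h => hv₁W (by rw [← h]; exact Finset.mem_insert_self _ _)
  have hwS : w ∉ S := fun h => hwSe (Finset.mem_erase.2 ⟨hwv₁, h⟩)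
  have hv₁Y : v₁ ∉ Y := fun h => hYS v₁ h hv₁S
  have hYcard : Y.card = m - 1 := by rw [← hYeq, Finset.card_erase_of_mem hvZ, hZf.2.1]
  set L₁ := (S.erase v₁).toList with hL₁def
  set L₂ := Y.toList with hL₂def
  have hL₁len : L₁.length = d - 1 := by
    rw [hL₁def, Finset.length_toList, Finset.card_erase_of_mem hv₁S, hScard]
  have hL₂len : L₂.length = m - 1 := by rw [hL₂def, Finset.length_toList, hYcard]
  set l : List B := v₁ :: (L₁ ++ v :: (L₂ ++ [w])) with hldef
  have htake_d : l.take d = v₁ :: L₁ := by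
    rw [hldef, show d = (d-1) + 1 by omega, List.take_succ_cons, List.take_left' hL₁len]
  have hdrop_d : l.drop d = v :: (L₂ ++ [w]) := by
    rw [hldef, show d = (d-1) + 1 by omega, List.drop_succ_cons, List.drop_left' hL₁len]
  have hdrop1 : l.drop 1 = L₁ ++ v :: (L₂ ++ [w]) := by rw [hldef]; rfl
  have htake_d' : (l.drop 1).take d = L₁ ++ [v] := by
    rw [hdrop1, show d = L₁.length + 1 by omega, List.take_append]
    simp
  have hdrop_d1 : l.drop (d+1) = L₂ ++ [w] := by
    rw [hldef, show d + 1 = (L₁.length + 1) + 1 by omega, List.drop_succ_cons, List.drop_append]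
    simp
  have htake_m : (l.drop d).take (k - d) = v :: L₂ := by
    rw [hdrop_d, show k - d = (m-1) + 1 by omega, List.take_succ_cons, List.take_left' hL₂len]
  have hfin1 : (l.take d).toFinset = S := by
    rw [htake_d, List.toFinset_cons, hL₁def, Finset.toList_toFinset, Finset.insert_erase hv₁S]
  have hfin2 : ((l.drop d).take (k-d)).toFinset = Z := by
    rw [htake_m, List.toFinset_cons, hL₂def, Finset.toList_toFinset, ← hYeq,
      Finset.insert_erase hvZ]
  have hfin3 : ((l.drop 1).take d).toFinset = S' := by
    rw [htake_d', List.toFinset_append, hL₁def, Finset.toList_toFinset, hS'def]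
    ext x; simp only [List.mem_toFinset, Finset.mem_union, Finset.mem_insert, List.mem_singleton]; tauto
  have hfin4 : (l.drop (d+1)).toFinset = insert w Y := by
    rw [hdrop_d1, List.toFinset_append, hL₂def, Finset.toList_toFinset]
    ext x; simp only [List.mem_toFinset, Finset.mem_union, Finset.mem_insert, List.mem_singleton]; tauto
  have hlen : l.length = k + 1 := by
    rw [hldef]
    simp only [List.length_cons, List.length_append, hL₁len, hL₂len, List.length_singleton, List.length_nil]
    omega
  have hn2 : (L₂ ++ [w]).Nodup := by
    rw [List.nodup_append]
    refine ⟨Finset.nodup_toList Y, List.nodup_singleton w, ?_⟩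
    rintro a ha b hb rfl
    rw [hL₂def, Finset.mem_toList] at ha
    rw [List.mem_singleton] at hb
    exact hwY (hb ▸ ha)
  have hn1 : (v :: (L₂ ++ [w])).Nodup := by
    rw [List.nodup_cons]
    refine ⟨?_, hn2⟩
    intro h
    rcases List.mem_append.1 h with h | h
    · exact hvY (by rwa [hL₂def, Finset.mem_toList] at h)
    · rw [List.mem_singleton] at h; exact hwv h.symm
  have hn0 : (L₁ ++ v :: (L₂ ++ [w])).Nodup := by
    rw [List.nodup_append]
    refine ⟨Finset.nodup_toList _, hn1, ?_⟩
    rintro a ha b hb rfl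
    rw [hL₁def, Finset.mem_toList] at ha
    have haS : a ∈ S := Finset.mem_of_mem_erase ha
    rcases List.mem_cons.1 hb with rfl | hb
    · exact hvS haS
    rcases List.mem_append.1 hb with hb | hb
    · exact hYS a (by rwa [hL₂def, Finset.mem_toList] at hb) haS
    · rw [List.mem_singleton] at hb; exact hwS (hb ▸ haS)
  have hnodup : l.Nodup := by
    rw [hldef, List.nodup_cons]
    refine ⟨?_, hn0⟩
    intro h
    rcases List.mem_append.1 h with h | h
    · exact Finset.notMem_erase v₁ S (by rwa [hL₁def, Finset.mem_toList] at h)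
    rcases List.mem_cons.1 h with h | h
    · exact hvS (h ▸ hv₁S)
    rcases List.mem_append.1 h with h | h
    · exact hv₁Y (by rwa [hL₂def, Finset.mem_toList] at h)
    · rw [List.mem_singleton] at h; exact hwv₁ h.symm
  refine ⟨l, hlen, hnodup, ?_, ?_, ?_, ?_⟩
  · rw [hfin1]; exact hS
  · rw [hfin2, hfin1]; exact hZC
  · rw [hfin3]; exact hS'mem
  · rw [hfin4, hfin3]; exact hWC'
end

section
/- (Structure of dense graphs above density 5/9.) For every μ > 0 there exists γ_0 > 0 such that for every 0 < γ ≤ γ_0 there exists t_0 such that for all t ≥ t_0 the following holds. Let L_1 and L_2 be 2-graphs (graphs) on a common vertex set of size t, each with edge density at least 5/9 + μ, and for i = 1, 2 let C_i be a connected component of L_i with the maximum number of edges. Then: (i) C_1 and C_2 have an edge in common; (ii) each C_i contains a switcher; (iii) each C_i has a fractional matching of size at least (1/3 + γ)·t; (iv) each C_i has at least (4/9 + γ)·(t choose 2) edges. -/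
open Finset

variable {A : Type*} [DecidableEq A]

set_option linter.unusedSectionVars false

-- basics
lemma getElem_idx_congr (w : List A) {i j : ℕ} (h : i = j) (hi : i < w.length) :
    w[i] = w[j]'(h ▸ hi) := by subst h; rfl

lemma take_two_drop (w : List A) (i : ℕ) (h : i + 2 ≤ w.length) :
    (w.drop i).take 2 = [w[i], w[i+1]] := by
  induction w generalizing i with
  | nil => simp at h
  | cons a l ih =>
    cases i with
    | zero =>
      match l, h with
      | b :: l', _ => simp
    | succ j =>
      simp only [List.drop_succ_cons]
      rw [ih j (by simpa using h)]
      simp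

lemma walkEdgeAt_pair (w : List A) (i : ℕ) (h : i + 2 ≤ w.length) :
    walkEdgeAt 2 w i = {w[i], w[i+1]} := by
  rw [walkEdgeAt, take_two_drop w i h]
  simp

lemma walkEdgeAt_drop (w : List A) (i j : ℕ) :
    walkEdgeAt 2 (w.drop j) i = walkEdgeAt 2 w (j + i) := by
  rw [walkEdgeAt, walkEdgeAt, List.drop_drop]

lemma isTightWalk_mono {E E' : Finset (Finset A)} (h : E ⊆ E') {w : List A}
    (hw : IsTightWalk 2 E w) : IsTightWalk 2 E' w :=
  ⟨hw.1, fun i hi => h (hw.2 i hi)⟩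

lemma isTightWalk_drop {E : Finset (Finset A)} {w : List A} (hw : IsTightWalk 2 E w)
    (j : ℕ) (hj : j + 2 ≤ w.length) : IsTightWalk 2 E (w.drop j) := by
  refine ⟨by simp; omega, fun i hi => ?_⟩
  rw [walkEdgeAt_drop]
  exact hw.2 _ (by simp at hi; omega)

lemma isTightWalk_reverse {E : Finset (Finset A)} {w : List A} (hw : IsTightWalk 2 E w) :
    IsTightWalk 2 E w.reverse := by
  refine ⟨by simpa using hw.1, fun i hi => ?_⟩
  simp only [List.length_reverse] at hi
  rw [walkEdgeAt_pair _ _ (by simpa using hi)]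
  have h1 : w.reverse[i]'(by simp; omega) = w[w.length - 1 - i]'(by omega) := List.getElem_reverse _
  have h2 : w.reverse[i+1]'(by simp; omega) = w[w.length - 1 - (i+1)]'(by omega) :=
    List.getElem_reverse _
  rw [h1, h2]
  have h3 := hw.2 (w.length - i - 2) (by omega)
  rw [walkEdgeAt_pair _ _ (by omega)] at h3
  have e1 : w.length - 1 - i = w.length - i - 2 + 1 := by omega
  have e2 : w.length - 1 - (i+1) = w.length - i - 2 := by omega
  rw [Finset.pair_comm]
  rw [getElem_idx_congr w e1 (by omega), getElem_idx_congr w e2 (by omega)]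
  exact h3

lemma walkEdgeAt_reverse (w : List A) (i : ℕ) (hi : i + 2 ≤ w.length) :
    walkEdgeAt 2 w.reverse (w.length - i - 2) = walkEdgeAt 2 w i := by
  rw [walkEdgeAt_pair _ _ (by simp; omega), walkEdgeAt_pair _ _ hi]
  have h1 : w.reverse[w.length - i - 2]'(by simp; omega) = w[w.length - 1 - (w.length - i - 2)]'(by omega) := List.getElem_reverse _
  have h2 : w.reverse[w.length - i - 2 + 1]'(by simp; omega) = w[w.length - 1 - (w.length - i - 2 + 1)]'(by omega) := List.getElem_reverse _
  have e1 : w.length - 1 - (w.length - i - 2) = i + 1 := by omega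
  have e2 : w.length - 1 - (w.length - i - 2 + 1) = i := by omega
  rw [h1, h2, Finset.pair_comm, getElem_idx_congr w e1 (by omega), getElem_idx_congr w e2 (by omega)]

lemma ordered_walk {C : Finset (Finset A)} (hTC : TightlyConnected 2 C)
    {g f : Finset A} (hg : g ∈ C) (hf : f ∈ C) :
    ∃ w : List A, IsTightWalk 2 C w ∧ ∃ i j, i ≤ j ∧ i + 2 ≤ w.length ∧ j + 2 ≤ w.length ∧
      walkEdgeAt 2 w i = g ∧ walkEdgeAt 2 w j = f := by
  obtain ⟨w, hw, ⟨i, hi, hie⟩, ⟨j, hj, hje⟩⟩ := hTC g hg f hf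
  rcases le_or_gt i j with hij | hij
  · exact ⟨w, hw, i, j, hij, hi, hj, hie, hje⟩
  · refine ⟨w.reverse, isTightWalk_reverse hw, w.length - i - 2, w.length - j - 2, by omega,
      by simp; omega, by simp; omega, ?_, ?_⟩
    · rw [walkEdgeAt_reverse w i hi]; exact hie
    · rw [walkEdgeAt_reverse w j hj]; exact hje

lemma walkEdgeAt_cons (v : A) (w : List A) (i : ℕ) :
    walkEdgeAt 2 (v :: w) (i + 1) = walkEdgeAt 2 w i := by
  rw [walkEdgeAt, walkEdgeAt, List.drop_succ_cons]

lemma pair_of_card_two {e : Finset A} (h : e.card = 2) {u : A} (hu : u ∈ e) :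
    ∃ v, v ≠ u ∧ e = {u, v} := by
  obtain ⟨a, b, hab, rfl⟩ := Finset.card_eq_two.1 h
  rcases Finset.mem_insert.1 hu with rfl | hu
  · exact ⟨b, fun h => hab h.symm, rfl⟩
  · rcases Finset.mem_singleton.1 hu with rfl
    exact ⟨a, hab, Finset.pair_comm _ _⟩

lemma tc_singleton {e : Finset A} (h : e.card = 2) : TightlyConnected 2 ({e} : Finset (Finset A)) := by
  obtain ⟨a, b, hab, rfl⟩ := Finset.card_eq_two.1 h
  intro e₁ he₁ e₂ he₂
  simp only [Finset.mem_singleton] at he₁ he₂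
  subst he₁; subst he₂
  have hw : walkEdgeAt 2 [a, b] 0 = {a, b} := by rw [walkEdgeAt]; simp
  refine ⟨[a, b], ⟨by simp, fun i hi => ?_⟩, ⟨0, by simp, hw⟩, ⟨0, by simp, hw⟩⟩
  simp only [List.length_cons, List.length_nil] at hi
  have : i = 0 := by omega
  subst this
  rw [hw]; exact Finset.mem_singleton_self _

lemma exists_component {E : Finset (Finset A)} (hE : ∀ e ∈ E, e.card = 2)
    {e : Finset A} (he : e ∈ E) : ∃ C, IsTightComponent 2 E C ∧ e ∈ C := by
  classical
  set S := E.powerset.filter (fun D => e ∈ D ∧ TightlyConnected 2 D) with hS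
  have hne : S.Nonempty := by
    refine ⟨{e}, Finset.mem_filter.2 ⟨Finset.mem_powerset.2 (by simpa using he),
      Finset.mem_singleton_self _, tc_singleton (hE e he)⟩⟩
  obtain ⟨C, hCS, hmax⟩ := S.exists_max_image Finset.card hne
  rw [hS, Finset.mem_filter, Finset.mem_powerset] at hCS
  refine ⟨C, ⟨hCS.1, hCS.2.2, fun C' hsub hsub' hTC' => ?_⟩, hCS.2.1⟩
  have : C' ∈ S := Finset.mem_filter.2 ⟨Finset.mem_powerset.2 hsub', hsub hCS.2.1, hTC'⟩
  exact (Finset.eq_of_subset_of_card_le hsub (hmax C' this)).symm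

lemma absorb {E C : Finset (Finset A)} (hC : IsTightComponent 2 E C)
    (hE : ∀ e ∈ E, e.card = 2) {e : Finset A} (he : e ∈ E) {u : A}
    (hu : u ∈ C.biUnion id) (hue : u ∈ e) : e ∈ C := by
  classical
  by_cases heC : e ∈ C
  · exact heC
  obtain ⟨v, hvu, rfl⟩ := pair_of_card_two (hE e he) hue
  obtain ⟨g, hgC, hug⟩ := by simpa using hu
  have hepair : walkEdgeAt 2 [u, v] 0 = {u, v} := by rw [walkEdgeAt]; simp
  have key : ∀ f ∈ C, ∃ w, IsTightWalk 2 (insert {u,v} C) w ∧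
      EdgeOnWalk 2 w {u, v} ∧ EdgeOnWalk 2 w f := by
    intro f hf
    obtain ⟨w, hw, i, j, hij, hi2, hj2, hwi, hwj⟩ := ordered_walk hC.2.1 hgC hf
    have hu_pair : u = w[i] ∨ u = w[i+1] := by
      have : u ∈ ({w[i], w[i+1]} : Finset A) := by
        rw [← walkEdgeAt_pair w i hi2, hwi]; exact hug
      simpa using this
    have hdrop : IsTightWalk 2 C (w.drop i) := isTightWalk_drop hw i hi2
    have hd0 : (w.drop i)[0]'(by simp; omega) = w[i] := by
      simp [List.getElem_drop]
    have hfj : walkEdgeAt 2 (w.drop i) (j - i) = f := by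
      rw [walkEdgeAt_drop]
      have : i + (j - i) = j := by omega
      rw [this]; exact hwj
    rcases hu_pair with h1 | h2
    · refine ⟨v :: w.drop i, ⟨by simp; omega, fun m hm => ?_⟩,
        ⟨0, by simp; omega, ?_⟩, ⟨(j - i) + 1, by simp; omega, ?_⟩⟩
      · match m with
        | 0 =>
          rw [walkEdgeAt_pair _ _ (by simpa using hm)]
          have : (v :: w.drop i)[1]'(by simp; omega) = w[i] := by
            simpa using hd0
          rw [this]
          simp only [List.getElem_cons_zero]
          rw [← h1, Finset.pair_comm v u]
          exact Finset.mem_insert_self _ _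
        | m + 1 =>
          rw [walkEdgeAt_cons]
          exact Finset.mem_insert_of_mem (hdrop.2 m (by simp at hm ⊢; omega))
      · rw [walkEdgeAt_pair _ _ (by simp; omega)]
        have : (v :: w.drop i)[1]'(by simp; omega) = w[i] := by simpa using hd0
        rw [this]
        simp only [List.getElem_cons_zero]
        rw [← h1]
        exact Finset.pair_comm _ _
      · rw [walkEdgeAt_cons]; exact hfj
    · refine ⟨v :: u :: w.drop i, ⟨by simp, fun m hm => ?_⟩,
        ⟨0, by simp, ?_⟩, ⟨(j - i) + 2, by simp; omega, ?_⟩⟩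
      · match m with
        | 0 =>
          rw [walkEdgeAt_pair _ _ (by simp)]
          simp only [List.getElem_cons_zero, List.getElem_cons_succ]
          rw [Finset.pair_comm v u]
          exact Finset.mem_insert_self _ _
        | 1 =>
          rw [walkEdgeAt_pair _ _ (by simp; omega)]
          simp only [List.getElem_cons_succ, List.getElem_cons_zero]
          have hwi' : ({u, w[i]} : Finset A) = g := by
            rw [walkEdgeAt_pair w i hi2] at hwi
            rw [← hwi, h2]
            exact Finset.pair_comm _ _
          rw [hd0, hwi']
          exact Finset.mem_insert_of_mem hgC
        | m + 2 =>
          rw [walkEdgeAt_cons, walkEdgeAt_cons]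
          exact Finset.mem_insert_of_mem (hdrop.2 m (by simp at hm ⊢; omega))
      · rw [walkEdgeAt_pair _ _ (by simp)]
        simp only [List.getElem_cons_zero, List.getElem_cons_succ]
        exact Finset.pair_comm _ _
      · rw [walkEdgeAt_cons, walkEdgeAt_cons]; exact hfj
  have hTC : TightlyConnected 2 (insert {u,v} C) := by
    intro e₁ h₁ e₂ h₂
    rcases Finset.mem_insert.1 h₁ with rfl | h₁ <;> rcases Finset.mem_insert.1 h₂ with rfl | h₂
    · refine ⟨[u, v], ⟨by simp, fun i hi => ?_⟩, ⟨0, by simp, hepair⟩, ⟨0, by simp, hepair⟩⟩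
      simp only [List.length_cons, List.length_nil] at hi
      have : i = 0 := by omega
      subst this
      rw [hepair]; exact Finset.mem_insert_self _ _
    · exact key e₂ h₂
    · obtain ⟨w, hw, h1, h2⟩ := key e₁ h₁
      exact ⟨w, hw, h2, h1⟩
    · obtain ⟨w, hw, h1, h2⟩ := hC.2.1 e₁ h₁ e₂ h₂
      exact ⟨w, isTightWalk_mono (Finset.subset_insert _ _) hw, h1, h2⟩
  have := hC.2.2 (insert {u,v} C) (Finset.subset_insert _ _)
    (Finset.insert_subset he hC.1) hTC
  rw [← this]
  exact Finset.mem_insert_self _ _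

set_option linter.unusedSectionVars false

lemma cast_choose_two (n : ℕ) : ((n.choose 2 : ℕ) : ℝ) = (n : ℝ) * ((n : ℝ) - 1) / 2 := by
  have h : (n.choose 2) * 2 = n * (n - 1) := by
    rw [Nat.choose_two_right]
    exact Nat.div_mul_cancel (Nat.even_mul_pred_self n).two_dvd
  cases n with
  | zero => simp
  | succ m =>
    have h2 : (((m+1).choose 2 : ℕ) : ℝ) * 2 = ((m + 1 : ℕ) : ℝ) * ((m : ℕ) : ℝ) := by
      exact_mod_cast congrArg (Nat.cast : ℕ → ℝ) h
    push_cast at h2 ⊢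
    linarith

section Graph

variable {B : Type*} [DecidableEq B] {V : Finset B} {E C : Finset (Finset B)}

def nbr (C : Finset (Finset B)) (v : B) : Finset B :=
  (C.biUnion id).filter (fun b => ({v, b} : Finset B) ∈ C)

lemma vertexSet_subset (hE : ∀ e ∈ E, e ⊆ V ∧ e.card = 2) (hCE : C ⊆ E) :
    C.biUnion id ⊆ V := by
  intro x hx
  obtain ⟨e, he, hxe⟩ := Finset.mem_biUnion.1 hx
  exact (hE e (hCE he)).1 hxe

lemma comp_subset_pow : C ⊆ (C.biUnion id).powersetCard 2 → True := fun _ => trivial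

lemma mem_vertexSet_of_edge {e : Finset B} (he : e ∈ C) {x : B} (hx : x ∈ e) :
    x ∈ C.biUnion id :=
  Finset.mem_biUnion.2 ⟨e, he, hx⟩

lemma comp_subset_powersetCard (hE : ∀ e ∈ E, e ⊆ V ∧ e.card = 2) (hCE : C ⊆ E) :
    C ⊆ (C.biUnion id).powersetCard 2 := by
  intro e he
  exact Finset.mem_powersetCard.2 ⟨fun x hx => mem_vertexSet_of_edge he hx, (hE e (hCE he)).2⟩

lemma edge_count_outside (hE : ∀ e ∈ E, e ⊆ V ∧ e.card = 2) (hC : IsTightComponent 2 E C) :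
    E.card ≤ C.card + ((V \ C.biUnion id).card.choose 2) := by
  classical
  have hsub : E \ C ⊆ (V \ C.biUnion id).powersetCard 2 := by
    intro e he
    obtain ⟨heE, heC⟩ := Finset.mem_sdiff.1 he
    refine Finset.mem_powersetCard.2 ⟨fun x hx => Finset.mem_sdiff.2 ⟨(hE e heE).1 hx, ?_⟩, (hE e heE).2⟩
    intro hxW
    exact heC (absorb hC (fun e' he' => (hE e' he').2) heE hxW hx)
  calc E.card ≤ (C ∪ (E \ C)).card := Finset.card_le_card (fun x hx => by
        by_cases h : x ∈ C
        · exact Finset.mem_union_left _ h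
        · exact Finset.mem_union_right _ (Finset.mem_sdiff.2 ⟨hx, h⟩))
    _ ≤ C.card + (E \ C).card := Finset.card_union_le _ _
    _ ≤ C.card + ((V \ C.biUnion id).card.choose 2) := by
        have := Finset.card_le_card hsub
        rw [Finset.card_powersetCard] at this
        omega

lemma nbr_symm (hE2 : ∀ e ∈ C, e.card = 2) {a b : B} (h : b ∈ nbr C a) : a ∈ nbr C b := by
  rw [nbr, Finset.mem_filter] at h ⊢
  rw [Finset.pair_comm]
  exact ⟨mem_vertexSet_of_edge h.2 (Finset.mem_insert_self _ _), h.2⟩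

lemma mem_nbr_ne (hE2 : ∀ e ∈ C, e.card = 2) {a b : B} (h : b ∈ nbr C a) : b ≠ a := by
  rintro rfl
  have := hE2 _ (Finset.mem_filter.1 h).2
  simp at this

lemma filter_eq_image_nbr (hE2 : ∀ e ∈ C, e.card = 2) (v : B) :
    C.filter (fun e => v ∈ e) = (nbr C v).image (fun b => ({v, b} : Finset B)) := by
  ext e
  simp only [Finset.mem_filter, Finset.mem_image]
  constructor
  · rintro ⟨heC, hve⟩
    obtain ⟨b, hbv, rfl⟩ := pair_of_card_two (hE2 e heC) hve
    refine ⟨b, ?_, rfl⟩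
    rw [nbr, Finset.mem_filter]
    exact ⟨mem_vertexSet_of_edge heC (Finset.mem_insert_of_mem (Finset.mem_singleton_self _)), heC⟩
  · rintro ⟨b, hb, rfl⟩
    exact ⟨(Finset.mem_filter.1 hb).2, Finset.mem_insert_self _ _⟩

lemma deg_eq_card_nbr (hE2 : ∀ e ∈ C, e.card = 2) (v : B) :
    (C.filter (fun e => v ∈ e)).card = (nbr C v).card := by
  rw [filter_eq_image_nbr hE2 v]
  apply Finset.card_image_of_injOn
  intro b hb b' hb' hbb'
  have h1 : b ∈ ({v, b'} : Finset B) := by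
    have : b ∈ ({v, b} : Finset B) := Finset.mem_insert_of_mem (Finset.mem_singleton_self _)
    simpa [hbb'] using this
  rcases Finset.mem_insert.1 h1 with rfl | h
  · exact absurd rfl (mem_nbr_ne hE2 hb)
  · exact Finset.mem_singleton.1 h

lemma sum_over_edges (hE2 : ∀ e ∈ C, e.card = 2) (g : B → ℝ) :
    ∑ e ∈ C, ∑ u ∈ e, g u = ∑ u ∈ C.biUnion id, ((nbr C u).card : ℝ) * g u := by
  classical
  have step1 : ∀ e ∈ C, ∑ u ∈ e, g u = ∑ u ∈ C.biUnion id, if u ∈ e then g u else 0 := by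
    intro e he
    rw [Finset.sum_ite_mem]
    congr 1
    rw [Finset.inter_eq_right.2 (fun x hx => mem_vertexSet_of_edge he hx)]
  rw [Finset.sum_congr rfl step1, Finset.sum_comm]
  apply Finset.sum_congr rfl
  intro u _
  rw [Finset.sum_ite, Finset.sum_const, Finset.sum_const_zero, add_zero, ← deg_eq_card_nbr hE2 u]
  simp [mul_comm]

end Graph

section Graph2
variable {B : Type*} [DecidableEq B] {C : Finset (Finset B)}

lemma switcher_of_dense (hE2 : ∀ e ∈ C, e.card = 2)
    (hlarge : ((C.biUnion id).card : ℝ) * ((C.biUnion id).card : ℝ) < 4 * C.card) :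
    HasSwitcher C := by
  classical
  set W := C.biUnion id with hW
  by_cases htri : ∃ a b c : B, ({a,b} : Finset B) ∈ C ∧ ({a,c} : Finset B) ∈ C ∧
      ({b,c} : Finset B) ∈ C ∧ a ≠ b ∧ c ≠ a ∧ c ≠ b
  · obtain ⟨a, b, c, hab, hac, hbc, hne1, hne2, hne3⟩ := htri
    have era : ({a,b} : Finset B).erase a = {b} := by
      rw [Finset.erase_insert (by simp [hne1])]
    have erb : ({a,b} : Finset B).erase b = {a} := by
      rw [Finset.pair_comm, Finset.erase_insert (by simp [hne1.symm])]
    refine ⟨{a, b}, hab, a, Finset.mem_insert_self _ _, ?_⟩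
    intro b' hb'
    have hcnot : c ∉ ({a, b} : Finset B) := by simp [hne2, hne3]
    rcases Finset.mem_insert.1 hb' with rfl | hb'
    · refine ⟨c, hcnot, ?_, ?_⟩ <;>
      · rw [era]
        have : insert c ({b} : Finset B) = {b, c} := Finset.pair_comm c b
        rw [this]; exact hbc
    · rcases Finset.mem_singleton.1 hb' with rfl
      refine ⟨c, hcnot, ?_, ?_⟩
      · rw [era]
        have : insert c ({b'} : Finset B) = {b', c} := Finset.pair_comm c b'
        rw [this]; exact hbc
      · rw [erb]
        have : insert c ({a} : Finset B) = {a, c} := Finset.pair_comm c a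
        rw [this]; exact hac
  · exfalso
    push_neg at htri
    have hdisj : ∀ e ∈ C, ∑ u ∈ e, ((nbr C u).card : ℝ) ≤ (W.card : ℝ) := by
      intro e he
      obtain ⟨a, b, hne, rfl⟩ := Finset.card_eq_two.1 (hE2 e he)
      rw [Finset.sum_pair hne]
      have hdis : Disjoint (nbr C a) (nbr C b) := by
        rw [Finset.disjoint_left]
        intro c hca hcb
        have h1 : ({a, c} : Finset B) ∈ C := (Finset.mem_filter.1 hca).2
        have h2 : ({b, c} : Finset B) ∈ C := (Finset.mem_filter.1 hcb).2
        exact (mem_nbr_ne hE2 hcb) (htri a b c he h1 h2 hne (mem_nbr_ne hE2 hca))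
      have hle : (nbr C a).card + (nbr C b).card ≤ W.card := by
        rw [← Finset.card_union_of_disjoint hdis]
        apply Finset.card_le_card
        intro x hx
        rcases Finset.mem_union.1 hx with h | h
        · exact (Finset.mem_filter.1 h).1
        · exact (Finset.mem_filter.1 h).1
      exact_mod_cast hle
    have hsum2 : ∑ u ∈ W, ((nbr C u).card : ℝ) = 2 * C.card := by
      have h1 := sum_over_edges hE2 (fun _ => (1:ℝ))
      simp only [mul_one] at h1
      have e2 : ∀ e ∈ C, ∑ _u ∈ e, (1:ℝ) = 2 := fun e he => by
        rw [Finset.sum_const, hE2 e he]; simp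
      rw [← h1, Finset.sum_congr rfl e2, Finset.sum_const]
      simp [mul_comm]
    have hsumsq : ∑ u ∈ W, ((nbr C u).card : ℝ) ^ 2 ≤ (W.card : ℝ) * C.card := by
      have h1 := sum_over_edges hE2 (fun u => ((nbr C u).card : ℝ))
      have h2 : ∑ e ∈ C, ∑ u ∈ e, ((nbr C u).card : ℝ) ≤ ∑ _e ∈ C, (W.card : ℝ) :=
        Finset.sum_le_sum hdisj
      rw [h1] at h2
      rw [Finset.sum_const] at h2
      have : ∑ u ∈ W, ((nbr C u).card : ℝ) ^ 2 = ∑ u ∈ W, ((nbr C u).card : ℝ) * ((nbr C u).card : ℝ) := by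
        apply Finset.sum_congr rfl; intro u _; ring
      rw [this]
      calc ∑ u ∈ W, ((nbr C u).card : ℝ) * ((nbr C u).card : ℝ) ≤ C.card • (W.card : ℝ) := h2
        _ = (W.card : ℝ) * C.card := by rw [nsmul_eq_mul]; ring
    have hcheb := sq_sum_le_card_mul_sum_sq (s := W) (f := fun u => ((nbr C u).card : ℝ))
    rw [hsum2] at hcheb
    have hC0 : (0:ℝ) ≤ C.card := by positivity
    have hW0 : (0:ℝ) ≤ W.card := by positivity
    nlinarith [hcheb, hsumsq, hlarge, hC0, hW0]

end Graph2

section Graph3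
variable {B : Type*} [DecidableEq B] {V : Finset B} {E C : Finset (Finset B)}

lemma degree_sum (hE : ∀ e ∈ E, e ⊆ V ∧ e.card = 2) :
    ∑ v ∈ V, (E.filter (fun e => v ∈ e)).card = 2 * E.card := by
  classical
  have h1 : ∀ v ∈ V, (E.filter (fun e => v ∈ e)).card = ∑ e ∈ E, if v ∈ e then 1 else 0 := by
    intro v _
    rw [Finset.sum_ite, Finset.sum_const, Finset.sum_const]
    simp
  rw [Finset.sum_congr rfl h1, Finset.sum_comm]
  have h2 : ∀ e ∈ E, (∑ v ∈ V, if v ∈ e then 1 else 0) = 2 := by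
    intro e he
    rw [Finset.sum_ite, Finset.sum_const, Finset.sum_const]
    simp only [smul_eq_mul, mul_one, mul_zero, add_zero]
    have : V.filter (fun v => v ∈ e) = e := by
      ext x
      simp only [Finset.mem_filter]
      exact ⟨fun h => h.2, fun h => ⟨(hE e he).1 h, h⟩⟩
    rw [this, (hE e he).2]
  rw [Finset.sum_congr rfl h2, Finset.sum_const, smul_eq_mul, mul_comm]

lemma indep_count (hE : ∀ e ∈ E, e ⊆ V ∧ e.card = 2) (hC : IsTightComponent 2 E C)
    {J : Finset B} (hJW : J ⊆ C.biUnion id)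
    (hind : ∀ a ∈ J, ∀ b ∈ J, ({a, b} : Finset B) ∉ C) :
    E.card + (((C.biUnion id).card - (J.biUnion (nbr C)).card).choose 2) ≤
      ((C.biUnion id).card.choose 2) +
      (((C.biUnion id).card - (J.biUnion (nbr C)).card - J.card).choose 2) +
      ((V \ C.biUnion id).card.choose 2) := by
  classical
  set W := C.biUnion id with hW
  set NJ := J.biUnion (nbr C) with hNJ
  have hNJW : NJ ⊆ W := by
    intro x hx
    obtain ⟨a, _, hxa⟩ := Finset.mem_biUnion.1 hx
    exact (Finset.mem_filter.1 hxa).1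
  have hJNJ : Disjoint J NJ := by
    rw [Finset.disjoint_left]
    intro a haJ haNJ
    obtain ⟨b, hbJ, hab⟩ := Finset.mem_biUnion.1 haNJ
    exact hind b hbJ a haJ (Finset.mem_filter.1 hab).2
  -- X : forbidden pairs
  set X := ((W \ NJ).powersetCard 2) \ (((W \ NJ) \ J).powersetCard 2) with hX
  have hEX : E ⊆ ((W.powersetCard 2) \ X) ∪ ((V \ W).powersetCard 2) := by
    intro e he
    by_cases hmeet : ∃ x ∈ e, x ∈ W
    · obtain ⟨x, hxe, hxW⟩ := hmeet
      have heC : e ∈ C := absorb hC (fun e' he' => (hE e' he').2) he hxW hxe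
      refine Finset.mem_union_left _ (Finset.mem_sdiff.2 ⟨?_, ?_⟩)
      · exact Finset.mem_powersetCard.2 ⟨fun y hy => mem_vertexSet_of_edge heC hy, (hE e he).2⟩
      · intro heX
        obtain ⟨h1, h2⟩ := Finset.mem_sdiff.1 heX
        have h1' := (Finset.mem_powersetCard.1 h1).1
        have : ∃ a ∈ e, a ∈ J := by
          by_contra hno
          push_neg at hno
          exact h2 (Finset.mem_powersetCard.2 ⟨fun y hy =>
            Finset.mem_sdiff.2 ⟨h1' hy, hno y hy⟩, (hE e he).2⟩)
        obtain ⟨a, hae, haJ⟩ := this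
        obtain ⟨b, hba, rfl⟩ := pair_of_card_two (hE _ he).2 hae
        have hbNJ : b ∈ NJ := by
          refine Finset.mem_biUnion.2 ⟨a, haJ, ?_⟩
          rw [nbr, Finset.mem_filter]
          exact ⟨mem_vertexSet_of_edge heC (by simp), heC⟩
        have := h1' (show b ∈ ({a,b} : Finset B) by simp)
        exact (Finset.mem_sdiff.1 this).2 hbNJ
    · push_neg at hmeet
      refine Finset.mem_union_right _ (Finset.mem_powersetCard.2
        ⟨fun y hy => Finset.mem_sdiff.2 ⟨(hE e he).1 hy, hmeet y hy⟩, (hE e he).2⟩)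
  have hXsub : X ⊆ W.powersetCard 2 := by
    intro p hp
    have := (Finset.mem_sdiff.1 hp).1
    rw [Finset.mem_powersetCard] at this ⊢
    exact ⟨this.1.trans (Finset.sdiff_subset), this.2⟩
  have hcard1 : E.card ≤ (W.powersetCard 2).card - X.card + ((V \ W).powersetCard 2).card := by
    calc E.card ≤ (((W.powersetCard 2) \ X) ∪ ((V \ W).powersetCard 2)).card :=
          Finset.card_le_card hEX
      _ ≤ ((W.powersetCard 2) \ X).card + ((V \ W).powersetCard 2).card := Finset.card_union_le _ _
      _ = (W.powersetCard 2).card - X.card + ((V \ W).powersetCard 2).card := by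
          rw [Finset.card_sdiff_of_subset hXsub]
  have hXcard : X.card = ((W \ NJ).powersetCard 2).card - (((W \ NJ) \ J).powersetCard 2).card := by
    rw [hX, Finset.card_sdiff_of_subset]
    intro p hp
    rw [Finset.mem_powersetCard] at hp ⊢
    exact ⟨hp.1.trans Finset.sdiff_subset, hp.2⟩
  have hJsub : J ⊆ W \ NJ := fun a ha =>
    Finset.mem_sdiff.2 ⟨hJW ha, Finset.disjoint_left.1 hJNJ ha⟩
  have c1 : (W.powersetCard 2).card = W.card.choose 2 := Finset.card_powersetCard 2 W
  have c2 : ((W \ NJ).powersetCard 2).card = (W.card - NJ.card).choose 2 := by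
    rw [Finset.card_powersetCard, Finset.card_sdiff_of_subset hNJW]
  have c3 : (((W \ NJ) \ J).powersetCard 2).card = (W.card - NJ.card - J.card).choose 2 := by
    rw [Finset.card_powersetCard, Finset.card_sdiff_of_subset hJsub, Finset.card_sdiff_of_subset hNJW]
  have c4 : ((V \ W).powersetCard 2).card = (V \ W).card.choose 2 := Finset.card_powersetCard 2 _
  have hmono : (((W \ NJ) \ J).powersetCard 2).card ≤ ((W \ NJ).powersetCard 2).card := by
    apply Finset.card_le_card
    intro p hp
    rw [Finset.mem_powersetCard] at hp ⊢
    exact ⟨hp.1.trans Finset.sdiff_subset, hp.2⟩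
  have hXle : X.card ≤ (W.powersetCard 2).card := Finset.card_le_card hXsub
  omega

end Graph3

section Graph4
variable {B : Type*} [DecidableEq B] {C : Finset (Finset B)}

lemma hall_from_indep (hE2 : ∀ e ∈ C, e.card = 2) (D : ℕ)
    (hJ : ∀ J : Finset B, J ⊆ C.biUnion id →
      (∀ a ∈ J, ∀ b ∈ J, ({a, b} : Finset B) ∉ C) →
      J.card ≤ (J.biUnion (nbr C)).card + D) :
    ∀ Aset : Finset B, Aset ⊆ C.biUnion id →
      Aset.card ≤ (Aset.biUnion (nbr C)).card + D := by
  classical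
  intro Aset hAW
  set W := C.biUnion id with hW
  set NA := Aset.biUnion (nbr C) with hNA
  set I := Aset \ NA with hI
  set K := Aset ∩ NA with hK
  set KN := K.biUnion (nbr C) with hKN
  set J := I \ KN with hJdef
  set NJ := J.biUnion (nbr C) with hNJ
  have hJI : J ⊆ I := Finset.sdiff_subset
  have hIA : I ⊆ Aset := Finset.sdiff_subset
  have hJA : J ⊆ Aset := hJI.trans hIA
  have hmemnbr : ∀ {a b : B}, a ∈ W → ({a, b} : Finset B) ∈ C → b ∈ nbr C a := by
    intro a b _ hab
    rw [nbr, Finset.mem_filter]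
    exact ⟨mem_vertexSet_of_edge hab (by simp), hab⟩
  have hind : ∀ a ∈ J, ∀ b ∈ J, ({a, b} : Finset B) ∉ C := by
    intro a ha b hb hab
    have hbNA : b ∈ NA := Finset.mem_biUnion.2 ⟨a, hJA ha, hmemnbr (hAW (hJA ha)) hab⟩
    exact (Finset.mem_sdiff.1 (hJI hb)).2 hbNA
  have hbound := hJ J (hJA.trans hAW) hind
  rw [← hNJ] at hbound
  -- NA ⊇ K ∪ NJ ∪ (I ∩ KN), pairwise disjoint
  have hsub : K ∪ NJ ∪ (I ∩ KN) ⊆ NA := by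
    intro x hx
    rcases Finset.mem_union.1 hx with hx | hx
    · rcases Finset.mem_union.1 hx with hx | hx
      · exact (Finset.mem_inter.1 hx).2
      · obtain ⟨j, hj, hxj⟩ := Finset.mem_biUnion.1 hx
        exact Finset.mem_biUnion.2 ⟨j, hJA hj, hxj⟩
    · obtain ⟨k, hk, hxk⟩ := Finset.mem_biUnion.1 (Finset.mem_inter.1 hx).2
      exact Finset.mem_biUnion.2 ⟨k, (Finset.mem_inter.1 hk).1, hxk⟩
  have hd1 : Disjoint K NJ := by
    rw [Finset.disjoint_left]
    intro x hxK hxNJ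
    obtain ⟨j, hjJ, hxj⟩ := Finset.mem_biUnion.1 hxNJ
    have hjx : j ∈ nbr C x := nbr_symm hE2 hxj
    have : j ∈ KN := Finset.mem_biUnion.2 ⟨x, hxK, hjx⟩
    exact (Finset.mem_sdiff.1 hjJ).2 this
  have hd2 : Disjoint (K ∪ NJ) (I ∩ KN) := by
    rw [Finset.disjoint_left]
    intro x hx hxI
    have hxI' := (Finset.mem_inter.1 hxI).1
    rcases Finset.mem_union.1 hx with hx | hx
    · exact (Finset.mem_sdiff.1 hxI').2 (Finset.mem_inter.1 hx).2
    · obtain ⟨j, hjJ, hxj⟩ := Finset.mem_biUnion.1 hx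
      have : x ∈ NA := Finset.mem_biUnion.2 ⟨j, hJA hjJ, hxj⟩
      exact (Finset.mem_sdiff.1 hxI').2 this
  have hNAcard : K.card + NJ.card + (I ∩ KN).card ≤ NA.card := by
    have h1 : (K ∪ NJ ∪ (I ∩ KN)).card = K.card + NJ.card + (I ∩ KN).card := by
      rw [Finset.card_union_of_disjoint hd2, Finset.card_union_of_disjoint hd1]
    rw [← h1]
    exact Finset.card_le_card hsub
  have hA1 : Aset.card = I.card + K.card := by
    rw [hI, hK, Finset.card_sdiff_add_card_inter]
  have hA2 : I.card = J.card + (I ∩ KN).card := by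
    rw [hJdef, Finset.card_sdiff_add_card_inter]
  omega

lemma frac_mono {m m' : ℝ} (h : HasFracMatching C m) (hle : m' ≤ m) :
    HasFracMatching C m' := by
  obtain ⟨w, h1, h2, h3⟩ := h
  exact ⟨w, h1, h2, hle.trans h3⟩

lemma frac_matching_of_hall (hE2 : ∀ e ∈ C, e.card = 2) (M : ℕ)
    (hM : M ≤ (C.biUnion id).card)
    (hall : ∀ Aset : Finset B, Aset ⊆ C.biUnion id →
      Aset.card ≤ (Aset.biUnion (nbr C)).card + ((C.biUnion id).card - M)) :
    HasFracMatching C ((M : ℝ) / 2) := by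
  classical
  set W := C.biUnion id with hW
  set D := W.card - M with hD
  -- bipartite double cover Hall system
  set tf : {x // x ∈ W} → Finset (B ⊕ ℕ) := fun u =>
    ((nbr C u.val).image Sum.inl) ∪ ((Finset.range D).image Sum.inr) with htf
  have hallcond : ∀ s : Finset {x // x ∈ W}, s.card ≤ (s.biUnion tf).card := by
    intro s
    rcases s.eq_empty_or_nonempty with rfl | ⟨u0, hu0⟩
    · simp
    · set Aset := s.image Subtype.val with hAset
      have hAW : Aset ⊆ W := by
        intro x hx
        obtain ⟨u, _, rfl⟩ := Finset.mem_image.1 hx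
        exact u.2
      have hcard : Aset.card = s.card := Finset.card_image_of_injective _ Subtype.val_injective
      have hsub : ((Aset.biUnion (nbr C)).image Sum.inl) ∪ ((Finset.range D).image Sum.inr)
          ⊆ s.biUnion tf := by
        intro x hx
        rcases Finset.mem_union.1 hx with hx | hx
        · obtain ⟨b, hb, rfl⟩ := Finset.mem_image.1 hx
          obtain ⟨a, haA, hba⟩ := Finset.mem_biUnion.1 hb
          obtain ⟨u, hus, rfl⟩ := Finset.mem_image.1 haA
          exact Finset.mem_biUnion.2 ⟨u, hus, Finset.mem_union_left _
            (Finset.mem_image.2 ⟨b, hba, rfl⟩)⟩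
        · exact Finset.mem_biUnion.2 ⟨u0, hu0, Finset.mem_union_right _ hx⟩
      have hdisj : Disjoint ((Aset.biUnion (nbr C)).image (Sum.inl : B → B ⊕ ℕ))
          ((Finset.range D).image Sum.inr) := by
        rw [Finset.disjoint_left]
        rintro x hx1 hx2
        obtain ⟨b, _, rfl⟩ := Finset.mem_image.1 hx1
        obtain ⟨m, _, hm⟩ := Finset.mem_image.1 hx2
        exact Sum.inl_ne_inr hm.symm
      have := hall Aset hAW
      calc s.card = Aset.card := hcard.symm
        _ ≤ (Aset.biUnion (nbr C)).card + D := this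
        _ = (((Aset.biUnion (nbr C)).image (Sum.inl : B → B ⊕ ℕ)) ∪
              ((Finset.range D).image Sum.inr)).card := by
            rw [Finset.card_union_of_disjoint hdisj,
              Finset.card_image_of_injective _ Sum.inl_injective,
              Finset.card_image_of_injective _ Sum.inr_injective, Finset.card_range]
        _ ≤ (s.biUnion tf).card := Finset.card_le_card hsub
  obtain ⟨f, hfinj, hft⟩ := (Finset.all_card_le_biUnion_card_iff_exists_injective tf).1 hallcond
  -- partner function
  set p : {x // x ∈ W} → B := fun u => ((f u).getLeft?).getD u.val with hp
  have hpleft : ∀ u, (f u).isLeft → (f u = Sum.inl (p u) ∧ p u ∈ nbr C u.val) := by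
    intro u hu
    have := hft u
    rw [htf] at this
    rcases Finset.mem_union.1 this with h | h
    · obtain ⟨b, hb, hfb⟩ := Finset.mem_image.1 h
      rw [hp]
      constructor
      · simp [← hfb]
      · simpa [← hfb] using hb
    · obtain ⟨m, _, hfm⟩ := Finset.mem_image.1 h
      rw [← hfm] at hu
      simp at hu
  set S := W.attach.filter (fun u => (f u).isLeft) with hS
  have hedge : ∀ u ∈ S, ({u.val, p u} : Finset B) ∈ C := by
    intro u hu
    have h := (hpleft u (Finset.mem_filter.1 hu).2).2
    exact (Finset.mem_filter.1 h).2
  -- weight function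
  set wt : Finset B → ℝ := fun e =>
    ((S.filter (fun u => e = {u.val, p u})).card : ℝ) / 2 with hwt
  refine ⟨wt, ?_, ?_, ?_⟩
  · intro e heC
    constructor
    · positivity
    · rw [hwt]
      have hle : (S.filter (fun u => e = {u.val, p u})).card ≤ 2 := by
        have hsub2 : ∀ u ∈ S.filter (fun u => e = {u.val, p u}), u.val ∈ e := by
          intro u hu
          rw [(Finset.mem_filter.1 hu).2]
          simp
        have := Finset.card_le_card_of_injOn (t := e) (fun u => u.val) (fun u hu => hsub2 u hu)
          (fun a _ b _ hab => Subtype.val_injective hab)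
        rw [hE2 e heC] at this
        exact this
      have : ((S.filter (fun u => e = {u.val, p u})).card : ℝ) ≤ 2 := by exact_mod_cast hle
      linarith
  · -- vertex loads
    intro v
    have hsum : ∑ e ∈ C.filter (fun e' => v ∈ e'), wt e =
        ((S.filter (fun u => v ∈ ({u.val, p u} : Finset B))).card : ℝ) / 2 := by
      rw [hwt]
      rw [← Finset.sum_div]
      congr 1
      have hcount := Finset.card_eq_sum_card_fiberwise
        (f := fun (u : {x // x ∈ W}) => ({u.val, p u} : Finset B))
        (s := S.filter (fun u => v ∈ ({u.val, p u} : Finset B)))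
        (t := C.filter (fun e' => v ∈ e'))
        (fun u hu => by
          have h1 := Finset.mem_filter.1 hu
          exact Finset.mem_filter.2 ⟨hedge u h1.1, h1.2⟩)
      rw [hcount]
      push_cast
      apply Finset.sum_congr rfl
      intro e he
      have hv : v ∈ e := (Finset.mem_filter.1 he).2
      apply congrArg
      congr 1
      ext u
      simp only [Finset.mem_filter]
      constructor
      · rintro ⟨h1, rfl⟩
        exact ⟨⟨h1, hv⟩, rfl⟩
      · rintro ⟨⟨h1, _⟩, h2⟩
        exact ⟨h1, h2.symm⟩
    rw [hsum]
    have hle2 : (S.filter (fun u => v ∈ ({u.val, p u} : Finset B))).card ≤ 2 := by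
      have hsplit : S.filter (fun u => v ∈ ({u.val, p u} : Finset B)) ⊆
          (S.filter (fun u => u.val = v)) ∪ (S.filter (fun u => p u = v)) := by
        intro u hu
        obtain ⟨huS, huv⟩ := Finset.mem_filter.1 hu
        rcases Finset.mem_insert.1 huv with h | h
        · exact Finset.mem_union_left _ (Finset.mem_filter.2 ⟨huS, h.symm⟩)
        · exact Finset.mem_union_right _ (Finset.mem_filter.2 ⟨huS,
            (Finset.mem_singleton.1 h).symm⟩)
      have h1 : (S.filter (fun u => u.val = v)).card ≤ 1 := by
        rw [Finset.card_le_one]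
        intro a ha b hb
        exact Subtype.val_injective ((Finset.mem_filter.1 ha).2.trans
          (Finset.mem_filter.1 hb).2.symm)
      have h2 : (S.filter (fun u => p u = v)).card ≤ 1 := by
        rw [Finset.card_le_one]
        intro a ha b hb
        have ha' := Finset.mem_filter.1 ha
        have hb' := Finset.mem_filter.1 hb
        have hfa : f a = Sum.inl v := by
          rw [(hpleft a (Finset.mem_filter.1 ha'.1).2).1, ha'.2]
        have hfb : f b = Sum.inl v := by
          rw [(hpleft b (Finset.mem_filter.1 hb'.1).2).1, hb'.2]
        exact hfinj (hfa.trans hfb.symm)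
      calc (S.filter (fun u => v ∈ ({u.val, p u} : Finset B))).card
          ≤ ((S.filter (fun u => u.val = v)) ∪ (S.filter (fun u => p u = v))).card :=
            Finset.card_le_card hsplit
        _ ≤ _ := Finset.card_union_le _ _
        _ ≤ 2 := by omega
    have : ((S.filter (fun u => v ∈ ({u.val, p u} : Finset B))).card : ℝ) ≤ 2 := by
      exact_mod_cast hle2
    linarith
  · -- total size
    have htotal : ∑ e ∈ C, wt e = (S.card : ℝ) / 2 := by
      rw [hwt, ← Finset.sum_div]
      congr 1
      have hcount := Finset.card_eq_sum_card_fiberwise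
        (f := fun (u : {x // x ∈ W}) => ({u.val, p u} : Finset B))
        (s := S) (t := C) hedge
      rw [hcount]
      push_cast
      apply Finset.sum_congr rfl
      intro e _
      apply congrArg
      congr 1
      ext u
      simp only [Finset.mem_filter, eq_comm]
    rw [htotal]
    have hScard : M ≤ S.card := by
      set Sr := W.attach.filter (fun u => ¬ (f u).isLeft) with hSr
      have hsplit : S.card + Sr.card = W.card := by
        rw [hS, hSr, Finset.card_filter_add_card_filter_not]
        exact Finset.card_attach
      have hSrD : Sr.card ≤ D := by
        have hmap : ∀ u ∈ Sr, f u ∈ (Finset.range D).image (Sum.inr : ℕ → B ⊕ ℕ) := by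
          intro u hu
          have h2 := (Finset.mem_filter.1 hu).2
          have := hft u
          rw [htf] at this
          rcases Finset.mem_union.1 this with h | h
          · obtain ⟨b, _, hfb⟩ := Finset.mem_image.1 h
            rw [← hfb] at h2
            simp at h2
          · exact h
        have := Finset.card_le_card_of_injOn f hmap (fun a _ b _ hab => hfinj hab)
        rw [Finset.card_image_of_injective _ Sum.inr_injective, Finset.card_range] at this
        exact this
      omega
    have : (M : ℝ) ≤ S.card := by exact_mod_cast hScard
    linarith

end Graph4

set_option maxHeartbeats 1000000

lemma numE (T w i n ET ν d : ℝ) (hν0 : 0 < ν) (hν1 : ν ≤ 1/9)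
    (hT : 1000000 ≤ ν * T)
    (h1 : (5/9 + ν) * (T * (T-1) / 2) ≤ ET)
    (h2 : ET + (w-n) * ((w-n) - 1) / 2 ≤ w * (w-1) / 2 + (w-n-i) * ((w-n-i) - 1) / 2
          + (T-w) * ((T-w) - 1) / 2)
    (h3 : i + n ≤ w)
    (h4 : d ≤ i - n)
    (hdlo : w - (2/3)*T - (ν/50)*T ≤ d) (hdhi : d ≤ w - (2/3)*T)
    (h5 : (2/3 + ν/8) * T ≤ w) (h6 : w ≤ T)
    (hn0 : 0 ≤ n) (hi0 : 0 ≤ i) : False := by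
  have hT1 : (9000000 : ℝ) ≤ T := by nlinarith
  have hnuT : (0:ℝ) ≤ ν * T := by linarith
  have hd0 : 0 ≤ d := by nlinarith
  have hz : d ≤ i := by linarith
  have hG : i * (2*w - 2*n - i - 1) ≤ w*(w-1) + (T-w)*((T-w)-1) - 2*ET := by linarith [h2]
  have hPA : w*(w-1) + (T-w)*((T-w)-1) - 2*ET < d * (2*w - d - 1) := by
    have hk : (0:ℝ) ≤ (w - (2/3)*T) * ((4/3)*T - w) :=
      mul_nonneg (by nlinarith) (by linarith)
    have hmono : (0:ℝ) ≤ (d - (w - (2/3)*T - (ν/50)*T)) * (2*w - d - (w - (2/3)*T - (ν/50)*T) - 1) := by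
      apply mul_nonneg (by linarith)
      nlinarith
    nlinarith [hk, hmono]
  have hPB : w*(w-1) + (T-w)*((T-w)-1) - 2*ET < ((w+d)/2) * ((w+d)/2 - 1) := by
    have hk : (0:ℝ) ≤ (T - w) * (w - T/3) := mul_nonneg (by linarith) (by nlinarith)
    have hmono : (0:ℝ) ≤ (d - (w - (2/3)*T - (ν/50)*T)) * ((w + d)/2 + (w + (w - (2/3)*T - (ν/50)*T))/2 - 1) := by
      apply mul_nonneg (by linarith)
      nlinarith
    nlinarith [hk, hmono]
  rcases le_or_gt (2*i) (w + d) with hc | hc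
  · have k1 : 0 ≤ (i - d) * (w + d - 2*i) := mul_nonneg (by linarith) (by linarith)
    have k3 : 0 ≤ i * (i - n - d) := mul_nonneg hi0 (by linarith)
    nlinarith [hG, hPA, hPB, k1, k3]
  · have k2 : 0 ≤ (i - (w+d)/2) * (i + (w+d)/2 - 1) := by
      apply mul_nonneg (by linarith)
      nlinarith
    have k3 : 0 ≤ i * (w - i - n) := mul_nonneg hi0 (by linarith)
    nlinarith [hG, hPB, k2, k3]


lemma numA (T w ν : ℝ) (hν0 : 0 < ν) (hν1 : ν ≤ 1/9) (hT : 1000000 ≤ ν * T)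
    (h1 : (5/9 + ν) * (T * (T-1)) ≤ w*(w-1) + (T-w)*((T-w)-1))
    (h2 : (5/9) * T ≤ w) (h3 : w ≤ T) : (2/3 + ν/2) * T ≤ w := by
  have hT1 : (9000000 : ℝ) ≤ T := by nlinarith
  by_contra hcon
  push_neg at hcon
  have hk : (0:ℝ) ≤ ((2/3 + ν/2)*T - w) * (w + (2/3 + ν/2)*T - T) := by
    apply mul_nonneg (by linarith)
    nlinarith
  nlinarith [hk, mul_pos hν0 (by nlinarith : (0:ℝ) < T)]

lemma numB (T wv ET Cv ν : ℝ) (hν0 : 0 < ν) (hν1 : ν ≤ 1/9) (hT : 1000000 ≤ ν * T)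
    (h1 : (5/9 + ν) * (T * (T-1) / 2) ≤ ET)
    (hout : ET ≤ Cv + (T-wv)*((T-wv)-1)/2)
    (hwv : (2/3 + ν/2) * T ≤ wv) (hwT : wv ≤ T) :
    (4/9 + ν) * (T * (T-1) / 2) ≤ Cv := by
  have hT1 : (9000000 : ℝ) ≤ T := by nlinarith
  have hk : (0:ℝ) ≤ ((1/3 - ν/2)*T - (T-wv)) * ((1/3 - ν/2)*T + (T-wv)) := by
    apply mul_nonneg (by linarith)
    nlinarith
  nlinarith [hk, mul_pos hν0 (by nlinarith : (0:ℝ) < T)]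

lemma numC (T w ν : ℝ) (hν0 : 0 < ν) (hν1 : ν ≤ 1/9) (hT : 1000000 ≤ ν * T)
    (h1 : (4/9 + ν) * (T * (T-1)) ≤ w*(w-1)) (h2 : 0 ≤ w) (h3 : w ≤ T) :
    (2/3 + ν/8) * T ≤ w := by
  have hT1 : (9000000 : ℝ) ≤ T := by nlinarith
  by_contra hcon
  push_neg at hcon
  have hk : (0:ℝ) ≤ ((2/3 + ν/8)*T - w) * ((2/3 + ν/8)*T + w) := by
    apply mul_nonneg (by linarith)
    nlinarith
  nlinarith [hk, mul_pos hν0 (by nlinarith : (0:ℝ) < T)]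

lemma numD (T w ET Cc ν : ℝ) (hν0 : 0 < ν) (hν1 : ν ≤ 1/9) (hT : 1000000 ≤ ν * T)
    (h1 : (5/9 + ν) * (T * (T-1) / 2) ≤ ET)
    (hout : ET ≤ Cc + (T-w)*((T-w)-1)/2)
    (hw : (2/3 + ν/8) * T ≤ w) (hwT : w ≤ T) : w * w < 4 * Cc := by
  have hT1 : (9000000 : ℝ) ≤ T := by nlinarith
  nlinarith [mul_nonneg (by linarith : (0:ℝ) ≤ T - w) (by nlinarith : (0:ℝ) ≤ w - T/3),
    mul_nonneg (by nlinarith : (0:ℝ) ≤ w - (2/3)*T) (by linarith : (0:ℝ) ≤ T - w),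
    mul_pos hν0 (by nlinarith : (0:ℝ) < T)]

lemma numF (T w1 w2 m E1 E2 C1 C2 ν : ℝ) (hν0 : 0 < ν) (hν1 : ν ≤ 1/9)
    (hT : 1000000 ≤ ν * T)
    (hm : w1 + w2 - T ≤ m)
    (hP : m*(m-1)/2 ≤ (w1*(w1-1)/2 - C1) + (w2*(w2-1)/2 - C2))
    (hC1 : E1 - (T-w1)*((T-w1)-1)/2 ≤ C1) (hC2 : E2 - (T-w2)*((T-w2)-1)/2 ≤ C2)
    (hE1 : (5/9 + ν) * (T * (T-1) / 2) ≤ E1) (hE2 : (5/9 + ν) * (T * (T-1) / 2) ≤ E2)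
    (hw1 : (2/3 + ν/8) * T ≤ w1) (hw1T : w1 ≤ T)
    (hw2 : (2/3 + ν/8) * T ≤ w2) (hw2T : w2 ≤ T) : False := by
  have hT1 : (9000000 : ℝ) ≤ T := by nlinarith
  have hs : (1:ℝ) ≤ w1 + w2 - T := by nlinarith [mul_pos hν0 (by nlinarith : (0:ℝ) < T)]
  have hmono : (0:ℝ) ≤ (m - (w1+w2-T)) * (m + (w1+w2-T) - 1) := by
    apply mul_nonneg (by linarith) (by linarith)
  have hk : (0:ℝ) ≤ ((1/3 - ν/8)*T - (w1-w2)) * ((1/3 - ν/8)*T + (w1-w2)) := by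
    apply mul_nonneg (by linarith) (by linarith)
  nlinarith [hmono, hk, mul_pos hν0 (by nlinarith : (0:ℝ) < T)]

section Main
variable {B : Type*} [DecidableEq B]

lemma main_graph {V : Finset B} {E C : Finset (Finset B)}
    {t : ℕ} {ν γ : ℝ} (hν0 : 0 < ν) (hν1 : ν ≤ 1/9) (hγ0 : 0 < γ) (hγ1 : γ ≤ ν/100)
    (hVt : V.card = t) (hT : 1000000 ≤ ν * t)
    (hE : ∀ e ∈ E, e ⊆ V ∧ e.card = 2)
    (hdens : (5/9 + ν) * ((t.choose 2 : ℕ) : ℝ) ≤ E.card)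
    (hC : IsTightComponent 2 E C)
    (hmax : ∀ C', IsTightComponent 2 E C' → C'.card ≤ C.card) :
    ((4/9 : ℝ) + ν) * ((t.choose 2 : ℕ) : ℝ) ≤ C.card ∧
    HasSwitcher C ∧
    HasFracMatching C ((1/3 + γ) * t) ∧
    C.biUnion id ⊆ V ∧
    (2/3 + ν/8) * t ≤ ((C.biUnion id).card : ℝ) ∧
    ((C.biUnion id).card ≤ t) ∧
    (E.card : ℝ) ≤ (C.card : ℝ) + (((t - (C.biUnion id).card).choose 2 : ℕ) : ℝ) ∧
    C ⊆ (C.biUnion id).powersetCard 2 := by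
  classical
  have hE2 : ∀ e ∈ E, e.card = 2 := fun e he => (hE e he).2
  have hE2C : ∀ e ∈ C, e.card = 2 := fun e he => hE2 e (hC.1 he)
  have hTR : (1000000 : ℝ) ≤ ν * t := hT
  have hT1 : (9000000 : ℝ) ≤ (t : ℝ) := by nlinarith
  have ht2 : 2 ≤ t := by exact_mod_cast (by linarith : (2:ℝ) ≤ (t:ℝ))
  have hch : ((t.choose 2 : ℕ) : ℝ) = (t:ℝ) * ((t:ℝ) - 1) / 2 := cast_choose_two t
  have hchpos : (0:ℝ) < ((t.choose 2 : ℕ) : ℝ) := by rw [hch]; nlinarith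
  have hEpos : 0 < E.card := by
    by_contra h
    push_neg at h
    have hE0 : (E.card : ℝ) = 0 := by exact_mod_cast Nat.le_zero.1 h
    rw [hE0] at hdens
    nlinarith
  -- max degree vertex
  have hVne : V.Nonempty := Finset.card_pos.1 (by omega)
  obtain ⟨v, hvV, hvmax⟩ := V.exists_max_image (fun v => (E.filter (fun e => v ∈ e)).card) hVne
  have hdegsum := degree_sum hE
  have hsumle : ∑ u ∈ V, (E.filter (fun e => u ∈ e)).card ≤
      V.card * (E.filter (fun e => v ∈ e)).card := by
    calc ∑ u ∈ V, (E.filter (fun e => u ∈ e)).card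
        ≤ V.card • (E.filter (fun e => v ∈ e)).card :=
          Finset.sum_le_card_nsmul V _ _ (fun x hx => hvmax x hx)
      _ = V.card * (E.filter (fun e => v ∈ e)).card := rfl
  have hdeg2E : 2 * E.card ≤ t * (E.filter (fun e => v ∈ e)).card := by
    rw [← hdegsum, ← hVt]; exact hsumle
  have hdegpos : 0 < (E.filter (fun e => v ∈ e)).card := by
    rcases Nat.eq_zero_or_pos (E.filter (fun e => v ∈ e)).card with h | h
    · rw [h] at hdeg2E; omega
    · exact h
  obtain ⟨e₀, he₀f⟩ := Finset.card_pos.1 hdegpos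
  have he₀E : e₀ ∈ E := (Finset.mem_filter.1 he₀f).1
  have hve₀ : v ∈ e₀ := (Finset.mem_filter.1 he₀f).2
  obtain ⟨Cv, hCv, he₀Cv⟩ := exists_component hE2 he₀E
  set Wv := Cv.biUnion id with hWv
  have hvWv : v ∈ Wv := mem_vertexSet_of_edge he₀Cv hve₀
  have habsorbv : ∀ e ∈ E, v ∈ e → e ∈ Cv := fun e he hv => absorb hCv hE2 he hvWv hv
  have hnbrWv : insert v (nbr E v) ⊆ Wv := by
    intro b hb
    rcases Finset.mem_insert.1 hb with rfl | hb
    · exact hvWv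
    · have h1 := (Finset.mem_filter.1 hb).2
      have h2 : ({v, b} : Finset B) ∈ Cv := habsorbv _ h1 (by simp)
      exact mem_vertexSet_of_edge h2 (by simp)
  have hWvcard : (E.filter (fun e => v ∈ e)).card + 1 ≤ Wv.card := by
    have h1 : (insert v (nbr E v)).card = (nbr E v).card + 1 :=
      Finset.card_insert_of_notMem (fun h => mem_nbr_ne hE2 h rfl)
    have h2 := Finset.card_le_card hnbrWv
    rw [h1] at h2
    rw [deg_eq_card_nbr hE2 v]
    omega
  -- real quantities for Cv
  have hWvV : Wv ⊆ V := vertexSet_subset hE hCv.1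
  have hWvt : Wv.card ≤ t := hVt ▸ Finset.card_le_card hWvV
  have hubv : Cv.card ≤ Wv.card.choose 2 := by
    have := Finset.card_le_card (comp_subset_powersetCard hE hCv.1)
    rwa [Finset.card_powersetCard] at this
  have houtv : E.card ≤ Cv.card + ((t - Wv.card).choose 2) := by
    have := edge_count_outside hE hCv
    rwa [Finset.card_sdiff_of_subset hWvV, hVt] at this
  -- cast lemmas
  have hcast : ∀ a : ℕ, a ≤ t → (((t - a : ℕ)) : ℝ) = (t:ℝ) - a := by
    intro a ha; push_cast [Nat.cast_sub ha]; ring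
  have hdegR : ((5:ℝ)/9 + ν) * ((t:ℝ)-1) ≤ ((E.filter (fun e => v ∈ e)).card : ℝ) := by
    have h2E : ((2:ℝ)) * E.card ≤ (t:ℝ) * ((E.filter (fun e => v ∈ e)).card : ℝ) := by
      exact_mod_cast hdeg2E
    rw [hch] at hdens
    have htpos : (0:ℝ) < t := by linarith
    have key : (t:ℝ) * ((5/9 + ν) * ((t:ℝ)-1)) ≤
        (t:ℝ) * ((E.filter (fun e => v ∈ e)).card : ℝ) := by nlinarith
    exact (mul_le_mul_iff_right₀ htpos).1 key
  have hwv59 : ((5:ℝ)/9) * t ≤ (Wv.card : ℝ) := by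
    have : ((E.filter (fun e => v ∈ e)).card : ℝ) + 1 ≤ (Wv.card : ℝ) := by
      exact_mod_cast hWvcard
    nlinarith
  have hwv23 : (2/3 + ν/2) * (t:ℝ) ≤ (Wv.card : ℝ) := by
    apply numA (t:ℝ) _ ν hν0 hν1 hTR _ hwv59 (by exact_mod_cast hWvt)
    have h1 : (E.card : ℝ) ≤ ((Wv.card.choose 2 : ℕ) : ℝ) + (((t - Wv.card).choose 2 : ℕ) : ℝ) := by
      have : E.card ≤ Wv.card.choose 2 + ((t - Wv.card).choose 2) := by omega
      exact_mod_cast this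
    rw [cast_choose_two, cast_choose_two, hcast _ hWvt] at h1
    rw [hch] at hdens
    nlinarith
  have hCvcard : ((4:ℝ)/9 + ν) * ((t.choose 2 : ℕ) : ℝ) ≤ (Cv.card : ℝ) := by
    rw [hch]
    apply numB (t:ℝ) (Wv.card : ℝ) (E.card : ℝ) _ ν hν0 hν1 hTR _ _ hwv23
      (by exact_mod_cast hWvt)
    · rw [hch] at hdens; exact hdens
    · have h1 : (E.card : ℝ) ≤ (Cv.card : ℝ) + (((t - Wv.card).choose 2 : ℕ) : ℝ) := by
        exact_mod_cast houtv
      rw [cast_choose_two, hcast _ hWvt] at h1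
      linarith
  have hCcard : ((4:ℝ)/9 + ν) * ((t.choose 2 : ℕ) : ℝ) ≤ (C.card : ℝ) := by
    have := hmax Cv hCv
    have h2 : (Cv.card : ℝ) ≤ (C.card : ℝ) := by exact_mod_cast this
    linarith
  -- now C's vertex set
  set W := C.biUnion id with hW
  have hWV : W ⊆ V := vertexSet_subset hE hC.1
  have hWt : W.card ≤ t := hVt ▸ Finset.card_le_card hWV
  have hub : C.card ≤ W.card.choose 2 := by
    have := Finset.card_le_card (comp_subset_powersetCard hE hC.1)
    rwa [Finset.card_powersetCard] at this
  have hout : E.card ≤ C.card + ((t - W.card).choose 2) := by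
    have := edge_count_outside hE hC
    rwa [Finset.card_sdiff_of_subset hWV, hVt] at this
  have houtR : (E.card : ℝ) ≤ (C.card : ℝ) + ((t:ℝ) - W.card) * (((t:ℝ) - W.card) - 1) / 2 := by
    have h1 : (E.card : ℝ) ≤ (C.card : ℝ) + (((t - W.card).choose 2 : ℕ) : ℝ) := by
      exact_mod_cast hout
    rw [cast_choose_two, hcast _ hWt] at h1
    exact h1
  have hwC : (2/3 + ν/8) * (t:ℝ) ≤ (W.card : ℝ) := by
    apply numC (t:ℝ) _ ν hν0 hν1 hTR _ (by positivity) (by exact_mod_cast hWt)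
    have h1 : (C.card : ℝ) ≤ ((W.card.choose 2 : ℕ) : ℝ) := by exact_mod_cast hub
    rw [cast_choose_two] at h1
    rw [hch] at hCcard
    nlinarith
  have hdensR : (5/9 + ν) * ((t:ℝ) * ((t:ℝ)-1) / 2) ≤ (E.card : ℝ) := by
    rw [hch] at hdens; exact hdens
  -- switcher
  have hswitch : HasSwitcher C := by
    apply switcher_of_dense hE2C
    rw [← hW]
    exact numD (t:ℝ) (W.card : ℝ) (E.card : ℝ) (C.card : ℝ) ν hν0 hν1 hTR hdensR
      (by linarith) hwC (by exact_mod_cast hWt)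
  -- fractional matching
  set M := ⌈(2/3 + 2*γ) * (t:ℝ)⌉₊ with hM
  have hMge : (2/3 + 2*γ) * (t:ℝ) ≤ M := Nat.le_ceil _
  have hMle : (M : ℝ) ≤ (2/3 + 2*γ) * (t:ℝ) + 1 := by
    have := Nat.ceil_lt_add_one (by positivity : (0:ℝ) ≤ (2/3 + 2*γ) * (t:ℝ))
    linarith
  have hgT : (0:ℝ) ≤ (ν/100 - γ) * t := mul_nonneg (by linarith) (by linarith)
  have hMw : M ≤ W.card := by
    have : (M : ℝ) ≤ (W.card : ℝ) := by nlinarith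
    exact_mod_cast this
  have hJbound : ∀ J : Finset B, J ⊆ C.biUnion id →
      (∀ a ∈ J, ∀ b ∈ J, ({a, b} : Finset B) ∉ C) →
      J.card ≤ (J.biUnion (nbr C)).card + ((C.biUnion id).card - M) := by
    intro J hJW hind
    rw [← hW] at hJW ⊢
    by_contra hcon
    push_neg at hcon
    set NJ := J.biUnion (nbr C) with hNJ
    have hNJW : NJ ⊆ W := by
      intro x hx
      obtain ⟨a, _, hxa⟩ := Finset.mem_biUnion.1 hx
      rw [hW]
      exact (Finset.mem_filter.1 hxa).1
    have hJNJ : Disjoint J NJ := by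
      rw [Finset.disjoint_left]
      intro a haJ haNJ
      obtain ⟨b, hbJ, hab⟩ := Finset.mem_biUnion.1 haNJ
      exact hind b hbJ a haJ (Finset.mem_filter.1 hab).2
    have hin : J.card + NJ.card ≤ W.card := by
      rw [← Finset.card_union_of_disjoint hJNJ]
      exact Finset.card_le_card (Finset.union_subset hJW hNJW)
    have hcount := indep_count hE hC (by rw [hW] at hJW; exact hJW) hind
    rw [← hW, ← hNJ] at hcount
    have hnW : NJ.card ≤ W.card := Finset.card_le_card hNJW
    have hcR : (E.card : ℝ) + ((W.card:ℝ) - NJ.card) * (((W.card:ℝ) - NJ.card) - 1) / 2 ≤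
        (W.card:ℝ) * ((W.card:ℝ)-1) / 2 +
        ((W.card:ℝ) - NJ.card - (J.card:ℝ)) * (((W.card:ℝ) - NJ.card - (J.card:ℝ)) - 1) / 2 +
        ((t:ℝ) - W.card) * (((t:ℝ) - W.card) - 1) / 2 := by
      have h1 : (E.card : ℝ) + (((W.card - NJ.card).choose 2 : ℕ) : ℝ) ≤
          ((W.card.choose 2 : ℕ) : ℝ) + (((W.card - NJ.card - J.card).choose 2 : ℕ) : ℝ) +
          (((V \ W).card.choose 2 : ℕ) : ℝ) := by exact_mod_cast hcount
      rw [cast_choose_two, cast_choose_two, cast_choose_two, cast_choose_two] at h1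
      rw [Finset.card_sdiff_of_subset hWV, hVt, hcast _ hWt] at h1
      have e0 : (((W.card - NJ.card : ℕ)) : ℝ) = (W.card:ℝ) - NJ.card := by
        rw [Nat.cast_sub hnW]
      have e1 : (((W.card - NJ.card - J.card : ℕ)) : ℝ) = (W.card:ℝ) - NJ.card - (J.card:ℝ) := by
        rw [Nat.cast_sub (by omega), Nat.cast_sub hnW]
      rw [e0, e1] at h1
      exact h1
    have hviol : (W.card:ℝ) - (2/3 + 2*γ) * t ≤ (J.card : ℝ) - NJ.card := by
      have h1 : NJ.card + (W.card - M) + 1 ≤ J.card := hcon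
      have h1R : (NJ.card:ℝ) + ((W.card:ℝ) - M) + 1 ≤ (J.card:ℝ) := by
        have h2 : ((NJ.card + (W.card - M) + 1 : ℕ) : ℝ) ≤ ((J.card : ℕ) : ℝ) := by
          exact_mod_cast h1
        push_cast [Nat.cast_sub hMw] at h2
        linarith
      linarith [hMle]
    have hγt : (0:ℝ) ≤ γ * t := mul_nonneg (by linarith) (by linarith)
    exact numE (t:ℝ) (W.card:ℝ) (J.card:ℝ) (NJ.card:ℝ) (E.card:ℝ) ν
      ((W.card:ℝ) - (2/3 + 2*γ) * t) hν0 hν1 hTR hdensR hcR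
      (by exact_mod_cast hin) hviol (by nlinarith [hgT]) (by nlinarith) hwC
      (by exact_mod_cast hWt) (by positivity) (by positivity)
  have hallW := hall_from_indep hE2C ((C.biUnion id).card - M) hJbound
  have hfrac0 := frac_matching_of_hall hE2C M (by rw [← hW]; exact hMw) hallW
  have hfrac : HasFracMatching C ((1/3 + γ) * t) := by
    apply frac_mono hfrac0
    linarith [hMge]
  have houtfin : (E.card : ℝ) ≤ (C.card : ℝ) + (((t - W.card).choose 2 : ℕ) : ℝ) := by
    exact_mod_cast hout
  exact ⟨hCcard, hswitch, hfrac, hWV, hwC, hWt, houtfin,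
    comp_subset_powersetCard hE hC.1⟩

end Main


/-- structure of dense graphs above density 5/9. -/
theorem dense_graphs_five_ninths (μ : ℝ) (hμ : 0 < μ) :
    ∃ γ₀ : ℝ, 0 < γ₀ ∧ ∀ γ : ℝ, 0 < γ → γ ≤ γ₀ →
      ∃ t₀ : ℕ, ∀ t : ℕ, t₀ ≤ t →
        ∀ (B : Type) [DecidableEq B], ∀ (V : Finset B) (E₁ E₂ C₁ C₂ : Finset (Finset B)),
          V.card = t →
          (∀ e ∈ E₁, e ⊆ V ∧ e.card = 2) → (∀ e ∈ E₂, e ⊆ V ∧ e.card = 2) →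
          ((5 / 9 : ℝ) + μ) * ((t.choose 2 : ℕ) : ℝ) ≤ (E₁.card : ℝ) →
          ((5 / 9 : ℝ) + μ) * ((t.choose 2 : ℕ) : ℝ) ≤ (E₂.card : ℝ) →
          IsTightComponent 2 E₁ C₁ → IsTightComponent 2 E₂ C₂ →
          (∀ C', IsTightComponent 2 E₁ C' → C'.card ≤ C₁.card) →
          (∀ C', IsTightComponent 2 E₂ C' → C'.card ≤ C₂.card) →
          (C₁ ∩ C₂).Nonempty ∧
          HasSwitcher C₁ ∧ HasSwitcher C₂ ∧
          HasFracMatching C₁ ((1 / 3 + γ) * (t : ℝ)) ∧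
          HasFracMatching C₂ ((1 / 3 + γ) * (t : ℝ)) ∧
          ((4 / 9 : ℝ) + γ) * ((t.choose 2 : ℕ) : ℝ) ≤ (C₁.card : ℝ) ∧
          ((4 / 9 : ℝ) + γ) * ((t.choose 2 : ℕ) : ℝ) ≤ (C₂.card : ℝ) := by
  classical
  set ν := min μ (1/9) with hνdef
  have hν0 : 0 < ν := lt_min hμ (by norm_num)
  have hν1 : ν ≤ 1/9 := min_le_right _ _
  have hνμ : ν ≤ μ := min_le_left _ _
  refine ⟨ν/100, by positivity, ?_⟩
  intro γ hγ0 hγ1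
  refine ⟨⌈(1000000:ℝ)/ν⌉₊, ?_⟩
  intro t ht B _ V E₁ E₂ C₁ C₂ hVt hE₁ hE₂ hd₁ hd₂ hC₁ hC₂ hm₁ hm₂
  have hT : (1000000:ℝ) ≤ ν * t := by
    have h1 : (1000000:ℝ)/ν ≤ (t:ℝ) := le_trans (Nat.le_ceil _) (by exact_mod_cast ht)
    rw [div_le_iff₀ hν0] at h1
    linarith [mul_comm ν (t:ℝ)]
  have hchnn : (0:ℝ) ≤ ((t.choose 2 : ℕ) : ℝ) := by positivity
  have hd₁' : ((5:ℝ)/9 + ν) * ((t.choose 2 : ℕ) : ℝ) ≤ (E₁.card : ℝ) := by nlinarith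
  have hd₂' : ((5:ℝ)/9 + ν) * ((t.choose 2 : ℕ) : ℝ) ≤ (E₂.card : ℝ) := by nlinarith
  obtain ⟨ha₁, hs₁, hf₁, hWV₁, hw₁, hwt₁, hout₁, hpow₁⟩ :=
    main_graph hν0 hν1 hγ0 hγ1 hVt hT hE₁ hd₁' hC₁ hm₁
  obtain ⟨ha₂, hs₂, hf₂, hWV₂, hw₂, hwt₂, hout₂, hpow₂⟩ :=
    main_graph hν0 hν1 hγ0 hγ1 hVt hT hE₂ hd₂' hC₂ hm₂
  have hT1 : (9000000 : ℝ) ≤ (t : ℝ) := by nlinarith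
  refine ⟨?_, hs₁, hs₂, hf₁, hf₂, by nlinarith, by nlinarith⟩
  by_contra hcon
  rw [Finset.not_nonempty_iff_eq_empty] at hcon
  set W₁ := C₁.biUnion id with hW₁
  set W₂ := C₂.biUnion id with hW₂
  set P := (W₁ ∩ W₂).powersetCard 2 with hP
  have hPsub : P ⊆ (P \ C₁) ∪ (P \ C₂) := by
    intro p hp
    by_cases h : p ∈ C₁
    · refine Finset.mem_union_right _ (Finset.mem_sdiff.2 ⟨hp, fun h2 => ?_⟩)
      have : p ∈ C₁ ∩ C₂ := Finset.mem_inter.2 ⟨h, h2⟩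
      rw [hcon] at this
      exact absurd this (Finset.notMem_empty p)
    · exact Finset.mem_union_left _ (Finset.mem_sdiff.2 ⟨hp, h⟩)
  have hkey : ∀ (W : Finset B) (C : Finset (Finset B)), C ⊆ W.powersetCard 2 →
      (W₁ ∩ W₂) ⊆ W → (P \ C).card ≤ W.card.choose 2 - C.card := by
    intro W C hCp hsub
    have h1 : P \ C ⊆ (W.powersetCard 2) \ C := by
      intro p hp
      obtain ⟨hp1, hp2⟩ := Finset.mem_sdiff.1 hp
      exact Finset.mem_sdiff.2 ⟨Finset.powersetCard_mono hsub hp1, hp2⟩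
    calc (P \ C).card ≤ ((W.powersetCard 2) \ C).card := Finset.card_le_card h1
      _ = (W.powersetCard 2).card - C.card := Finset.card_sdiff_of_subset hCp
      _ = W.card.choose 2 - C.card := by rw [Finset.card_powersetCard]
  have hk₁ := hkey W₁ C₁ hpow₁ Finset.inter_subset_left
  have hk₂ := hkey W₂ C₂ hpow₂ Finset.inter_subset_right
  have hcle₁ : C₁.card ≤ W₁.card.choose 2 := by
    have := Finset.card_le_card hpow₁
    rwa [Finset.card_powersetCard] at this
  have hcle₂ : C₂.card ≤ W₂.card.choose 2 := by
    have := Finset.card_le_card hpow₂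
    rwa [Finset.card_powersetCard] at this
  have hPcard : (W₁ ∩ W₂).card.choose 2 ≤ (W₁.card.choose 2 - C₁.card) +
      (W₂.card.choose 2 - C₂.card) := by
    have h1 : P.card ≤ (P \ C₁).card + (P \ C₂).card :=
      le_trans (Finset.card_le_card hPsub) (Finset.card_union_le _ _)
    have h2 : P.card = (W₁ ∩ W₂).card.choose 2 := Finset.card_powersetCard 2 _
    omega
  -- cast to reals
  have hcast : ∀ a : ℕ, a ≤ t → (((t - a : ℕ)) : ℝ) = (t:ℝ) - a := by
    intro a ha
    rw [Nat.cast_sub ha]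
  have hm : (W₁.card : ℝ) + W₂.card - t ≤ ((W₁ ∩ W₂).card : ℝ) := by
    have h1 : (W₁ ∪ W₂).card + (W₁ ∩ W₂).card = W₁.card + W₂.card :=
      Finset.card_union_add_card_inter _ _
    have h2 : (W₁ ∪ W₂).card ≤ t := by
      rw [← hVt]
      exact Finset.card_le_card (Finset.union_subset hWV₁ hWV₂)
    have h3 : W₁.card + W₂.card ≤ t + (W₁ ∩ W₂).card := by omega
    have := (Nat.cast_le (α := ℝ)).2 h3
    push_cast at this
    linarith
  have hPR : ((W₁ ∩ W₂).card : ℝ) * (((W₁ ∩ W₂).card : ℝ) - 1) / 2 ≤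
      ((W₁.card:ℝ) * ((W₁.card:ℝ)-1)/2 - C₁.card) +
      ((W₂.card:ℝ) * ((W₂.card:ℝ)-1)/2 - C₂.card) := by
    have h1 : (((W₁ ∩ W₂).card.choose 2 : ℕ) : ℝ) ≤
        (((W₁.card.choose 2 - C₁.card : ℕ)) : ℝ) + (((W₂.card.choose 2 - C₂.card : ℕ)) : ℝ) := by
      exact_mod_cast hPcard
    rw [Nat.cast_sub hcle₁, Nat.cast_sub hcle₂, cast_choose_two, cast_choose_two,
      cast_choose_two] at h1
    linarith
  have houtR₁ : (E₁.card : ℝ) - ((t:ℝ) - W₁.card) * (((t:ℝ) - W₁.card) - 1) / 2 ≤ C₁.card := by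
    have := hout₁
    rw [cast_choose_two, hcast _ hwt₁] at this
    linarith
  have houtR₂ : (E₂.card : ℝ) - ((t:ℝ) - W₂.card) * (((t:ℝ) - W₂.card) - 1) / 2 ≤ C₂.card := by
    have := hout₂
    rw [cast_choose_two, hcast _ hwt₂] at this
    linarith
  have hch : ((t.choose 2 : ℕ) : ℝ) = (t:ℝ) * ((t:ℝ) - 1) / 2 := cast_choose_two t
  rw [hch] at hd₁' hd₂'
  exact numF (t:ℝ) (W₁.card:ℝ) (W₂.card:ℝ) ((W₁ ∩ W₂).card : ℝ) (E₁.card:ℝ) (E₂.card:ℝ)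
    (C₁.card:ℝ) (C₂.card:ℝ) ν hν0 hν1 hT hm hPR houtR₁ houtR₂ hd₁' hd₂'
    hw₁ (by exact_mod_cast hwt₁) hw₂ (by exact_mod_cast hwt₂)
end
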